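/- arXiv:1104.1097 — 4 statements merged into one kernel-verified Lean document; each statement's English description precedes it below -/
import Mathlib

section
/- Let n > 1 and let D be a set of proper divisors of n with greatest common divisor 1, so that the integral circulant graph ICG_n(D) is connected. Then every eigenvalue of the distance matrix of ICG_n(D) is an integer. -/
open scoped Classical

/-- The integral circulant graph `ICG_n(D)`: vertices `0,…,n-1` (as `ZMod n`), with `a ~ b` iff
`gcd(a-b, n) ∈ D`. -/
def ICG (n : ℕ) (D : Finset ℕ) : SimpleGraph (ZMod n) where
  Adj a b := a ≠ b ∧ Int.gcd ((a.val : ℤ) - (b.val : ℤ)) n ∈ D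
  symm := by
    constructor
    rintro a b ⟨hne, h⟩
    refine ⟨hne.symm, ?_⟩
    rwa [show ((b.val : ℤ) - a.val) = -((a.val : ℤ) - b.val) by ring, Int.neg_gcd]
  loopless := by constructor; rintro a ⟨h, -⟩; exact h rfl

/-- The distance matrix of a graph. -/
noncomputable def distMatrix {V : Type} [Fintype V] (G : SimpleGraph V) : Matrix V V ℝ :=
  Matrix.of fun i j => (G.dist i j : ℝ)

/-- The distance energy: the sum of the absolute values of the eigenvalues (with multiplicity)
of the distance matrix, i.e. of the roots of its characteristic polynomial. -/
noncomputable def distEnergy {V : Type} [Fintype V] [DecidableEq V] (G : SimpleGraph V) : ℝ :=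
  ((distMatrix G).charpoly.roots.map fun x => |x|).sum

set_option linter.unusedSectionVars false

section ICGaux

variable {n : ℕ} [NeZero n]

private lemma int_gcd_invariant (r k : ℤ) :
    Int.gcd (r + (n : ℤ) * k) n = Int.gcd r n := by
  have key : ∀ a b : ℤ, Int.gcd a n ∣ Int.gcd (a + (n : ℤ) * b) n := by
    intro a b
    have h1 : ((Int.gcd a n : ℤ)) ∣ (a + (n : ℤ) * b) :=
      dvd_add (Int.gcd_dvd_left _ _) ((Int.gcd_dvd_right _ _).mul_right b)
    have := Int.dvd_coe_gcd h1 (Int.gcd_dvd_right (a := a) (b := (n : ℤ)))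
    exact_mod_cast this
  have h2 := key (r + (n : ℤ) * k) (-k)
  rw [show r + (n : ℤ) * k + (n : ℤ) * (-k) = r by ring] at h2
  exact Nat.dvd_antisymm h2 (key r k)

private lemma gcd_val_int (x : ℤ) : Int.gcd x n = Nat.gcd (x : ZMod n).val n := by
  set r : ℕ := (x : ZMod n).val with hr
  have h0 : ((x - (r : ℤ) : ℤ) : ZMod n) = 0 := by
    push_cast
    simp [hr, ZMod.natCast_val, ZMod.cast_id]
  obtain ⟨k, hk⟩ := ((ZMod.intCast_zmod_eq_zero_iff_dvd _ n).mp h0)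
  have hx : x = (r : ℤ) + (n : ℤ) * k := by linarith
  rw [hx, int_gcd_invariant]
  exact Int.gcd_natCast_natCast r n

lemma ICG_adj_iff (D : Finset ℕ) (a b : ZMod n) :
    (ICG n D).Adj a b ↔ a ≠ b ∧ Nat.gcd (a - b).val n ∈ D := by
  have h : Int.gcd ((a.val : ℤ) - (b.val : ℤ)) n = Nat.gcd (a - b).val n := by
    rw [gcd_val_int]
    congr 2
    push_cast
    simp [ZMod.natCast_val, ZMod.cast_id]
  constructor
  · rintro ⟨h1, h2⟩; exact ⟨h1, h ▸ h2⟩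
  · rintro ⟨h1, h2⟩; exact ⟨h1, h ▸ h2⟩

lemma iso_dist {V W : Type*} (G : SimpleGraph V) (G' : SimpleGraph W) (f : G ≃g G')
    (u v : V) : G'.dist (f u) (f v) = G.dist u v := by
  rw [SimpleGraph.dist_eq_sInf, SimpleGraph.dist_eq_sInf]
  congr 1
  ext L
  constructor
  · rintro ⟨q, rfl⟩
    exact ⟨(q.map f.symm.toHom).copy (by simp) (by simp), by simp⟩
  · rintro ⟨p, rfl⟩
    exact ⟨p.map f.toHom, by simp⟩

private lemma gcd_mod (y : ℕ) : Nat.gcd (y % n) n = Nat.gcd y n := by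
  rw [← Nat.gcd_rec, Nat.gcd_comm]

lemma gcd_unit_mul (u : (ZMod n)ˣ) (x : ZMod n) :
    Nat.gcd ((u : ZMod n) * x).val n = Nat.gcd x.val n := by
  rw [ZMod.val_mul, gcd_mod]
  exact Nat.Coprime.gcd_mul_left_cancel x.val (ZMod.val_coe_unit_coprime u)

def unitIso (D : Finset ℕ) (u : (ZMod n)ˣ) : ICG n D ≃g ICG n D where
  toFun x := (u : ZMod n) * x
  invFun x := ((u⁻¹ : (ZMod n)ˣ) : ZMod n) * x
  left_inv x := by simp [← mul_assoc]
  right_inv x := by simp [← mul_assoc]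
  map_rel_iff' := by
    intro a b
    simp only [Equiv.coe_fn_mk, ICG_adj_iff, ne_eq, Units.mul_right_inj, ← mul_sub,
      gcd_unit_mul]

def translateIso (D : Finset ℕ) (c : ZMod n) : ICG n D ≃g ICG n D where
  toFun x := x + c
  invFun x := x - c
  left_inv x := by ring
  right_inv x := by ring
  map_rel_iff' := by
    intro a b
    simp only [Equiv.coe_fn_mk, ICG_adj_iff, ne_eq, add_left_inj]
    rw [show a + c - (b + c) = a - b by ring]

lemma dist_translate (D : Finset ℕ) (i k : ZMod n) :
    (ICG n D).dist i k = (ICG n D).dist 0 (k - i) := by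
  have h := iso_dist (ICG n D) (ICG n D) (translateIso D (-i)) i k
  rw [show ((translateIso (n := n) D (-i)) i : ZMod n) = 0 by
        show i + -i = 0; ring,
      show ((translateIso (n := n) D (-i)) k : ZMod n) = k - i by
        show k + -i = k - i; ring] at h
  exact h.symm

lemma dist_unit_mul (D : Finset ℕ) (u : (ZMod n)ˣ) (x : ZMod n) :
    (ICG n D).dist 0 ((u : ZMod n) * x) = (ICG n D).dist 0 x := by
  have := iso_dist (ICG n D) (ICG n D) (unitIso D u) 0 x
  simpa [unitIso] using this

lemma exists_unit_mul (a : ZMod n) :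
    ∃ u : (ZMod n)ˣ, (u : ZMod n) * ((Nat.gcd a.val n : ℕ) : ZMod n) = a := by
  by_cases ha : a = 0
  · refine ⟨1, ?_⟩
    subst ha
    simp [ZMod.val_zero, Nat.gcd_zero_left, ZMod.natCast_self]
  · have hnpos : 0 < n := Nat.pos_of_ne_zero (NeZero.ne n)
    set d := Nat.gcd a.val n with hd
    have hd0 : 0 < d := Nat.gcd_pos_of_pos_right _ hnpos
    have hdn : d ∣ n := Nat.gcd_dvd_right _ _
    have hda : d ∣ a.val := Nat.gcd_dvd_left _ _
    set n' := n / d with hn'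
    have hn'dvd : n' ∣ n := Nat.div_dvd_of_dvd hdn
    have hcop : Nat.Coprime (a.val / d) n' := Nat.coprime_div_gcd_div_gcd hd0
    haveI : NeZero n' := ⟨(Nat.div_pos (Nat.le_of_dvd hnpos hdn) hd0).ne'⟩
    obtain ⟨u, hu⟩ := ZMod.unitsMap_surjective hn'dvd (ZMod.unitOfCoprime _ hcop)
    have hcast : (ZMod.castHom hn'dvd (ZMod n')) (u : ZMod n) = ((a.val / d : ℕ) : ZMod n') := by
      have := congrArg (Units.val) hu
      simpa [ZMod.unitsMap_def, ZMod.coe_unitOfCoprime] using this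
    have key : ∀ x y : ZMod n,
        ZMod.castHom hn'dvd (ZMod n') x = ZMod.castHom hn'dvd (ZMod n') y →
        (d : ZMod n) * x = (d : ZMod n) * y := by
      intro x y hxy
      have h0 : (ZMod.castHom hn'dvd (ZMod n')) (x - y) = 0 := by
        rw [map_sub, hxy, sub_self]
      have hdvd' : n' ∣ (x - y).val := by
        rwa [ZMod.castHom_apply, ← ZMod.natCast_val, ZMod.natCast_eq_zero_iff] at h0
      obtain ⟨k, hk⟩ := hdvd'
      have h2 : (d : ZMod n) * (x - y) = 0 := by
        have hcast2 : (((x - y).val : ℕ) : ZMod n) = x - y := ZMod.natCast_rightInverse _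
        rw [← hcast2, hk]
        push_cast
        rw [← mul_assoc, ← Nat.cast_mul, Nat.mul_div_cancel' hdn, ZMod.natCast_self, zero_mul]
      rw [mul_sub] at h2
      exact sub_eq_zero.mp h2
    refine ⟨u, ?_⟩
    have hval : a = ((d * (a.val / d) : ℕ) : ZMod n) := by
      rw [Nat.mul_div_cancel' hda]
      exact (ZMod.natCast_rightInverse a).symm
    have hkey := key (u : ZMod n) (((a.val / d : ℕ) : ZMod n)) (by rw [hcast, map_natCast])
    rw [mul_comm]
    rw [hval]
    push_cast
    rw [hkey]

end ICGaux

noncomputable def zeta (n : ℕ) : ℂ := Complex.exp (2 * Real.pi * Complex.I / n)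

noncomputable def psi (n : ℕ) (x : ZMod n) : ℂ := zeta n ^ x.val

section Part3
variable {n : ℕ} [NeZero n]

lemma zeta_prim : IsPrimitiveRoot (zeta n) n := Complex.isPrimitiveRoot_exp n (NeZero.ne n)

lemma zeta_pow_mod (a : ℕ) : zeta n ^ a = zeta n ^ (a % n) := by
  conv_lhs => rw [← Nat.div_add_mod a n]
  rw [pow_add, pow_mul, IsPrimitiveRoot.pow_eq_one (zeta_prim (n := n)), one_pow, one_mul]

lemma psi_zero : psi n 0 = 1 := by simp [psi, ZMod.val_zero]

lemma psi_add (x y : ZMod n) : psi n (x + y) = psi n x * psi n y := by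
  unfold psi
  rw [ZMod.val_add, ← zeta_pow_mod, pow_add]

lemma psi_natmul (x : ZMod n) (t : ℕ) : psi n (x * (t : ℕ)) = psi n x ^ t := by
  induction t with
  | zero => simp [psi_zero]
  | succ t ih =>
    have : x * ((t + 1 : ℕ) : ZMod n) = x * (t : ℕ) + x := by push_cast; ring
    rw [this, psi_add, ih, pow_succ]

lemma psi_eq_one_iff (x : ZMod n) : psi n x = 1 ↔ x = 0 := by
  unfold psi
  rw [IsPrimitiveRoot.pow_eq_one_iff_dvd (zeta_prim (n := n))]
  constructor
  · intro h
    have := Nat.eq_zero_of_dvd_of_lt h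
    rcases Nat.eq_zero_or_pos x.val with h0 | hpos
    · exact (ZMod.val_eq_zero x).mp h0
    · exact absurd (this (ZMod.val_lt x)) (by omega)
  · intro h; subst h; simp [ZMod.val_zero]

lemma sum_zmod (f : ZMod n → ℂ) : ∑ x : ZMod n, f x = ∑ t ∈ Finset.range n, f t := by
  refine Finset.sum_nbij' (fun x => x.val) (fun t => (t : ZMod n)) ?_ ?_ ?_ ?_ ?_
  · intro x _; exact Finset.mem_range.mpr (ZMod.val_lt x)
  · intro t _; exact Finset.mem_univ _
  · intro x _; exact ZMod.natCast_rightInverse x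
  · intro t ht; exact ZMod.val_cast_of_lt (Finset.mem_range.mp ht)
  · intro x _; rw [ZMod.natCast_rightInverse x]

lemma sum_psi (m : ZMod n) : ∑ j : ZMod n, psi n (j * m) = if m = 0 then (n : ℂ) else 0 := by
  split_ifs with hm
  · subst hm
    simp [psi_zero, Finset.card_univ, ZMod.card]
  · rw [sum_zmod (fun j => psi n (j * m))]
    have h1 : ∀ t : ℕ, psi n ((t : ZMod n) * m) = psi n m ^ t := by
      intro t; rw [mul_comm, psi_natmul]
    simp_rw [h1]
    have hω : psi n m ^ n = 1 := by
      rw [← psi_natmul, ZMod.natCast_self, mul_zero, psi_zero]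
    have hne : psi n m - 1 ≠ 0 := sub_ne_zero.mpr (fun h => hm ((psi_eq_one_iff m).mp h))
    have := geom_sum_mul (psi n m) n
    rw [hω, sub_self] at this
    exact (mul_eq_zero.mp this).resolve_right hne

end Part3

/-- coefficient function: distance from 0, as a complex number -/
noncomputable def ccf (n : ℕ) (D : Finset ℕ) : ZMod n → ℂ :=
  fun x => ((ICG n D).dist 0 x : ℂ)

/-- the circulant eigenvalues -/
noncomputable def lam (n : ℕ) [NeZero n] (D : Finset ℕ) : ZMod n → ℂ :=
  fun j => ∑ m : ZMod n, ccf n D m * psi n (j * m)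

noncomputable def Wmat (n : ℕ) [NeZero n] : Matrix (ZMod n) (ZMod n) ℂ :=
  Matrix.of fun i j => psi n (j * i)

noncomputable def Xmat (n : ℕ) [NeZero n] : Matrix (ZMod n) (ZMod n) ℂ :=
  Matrix.of fun i j => psi n (-(i * j))

section Part4
variable {n : ℕ} [NeZero n] (D : Finset ℕ)

lemma ccf_gcd (x : ZMod n) : ccf n D x = ccf n D ((Nat.gcd x.val n : ℕ) : ZMod n) := by
  obtain ⟨u, hu⟩ := exists_unit_mul x
  conv_lhs => rw [← hu]
  unfold ccf
  rw [dist_unit_mul]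

lemma WX_eq : Wmat n * Xmat n = (n : ℂ) • 1 := by
  ext i k
  rw [Matrix.mul_apply]
  have h1 : ∀ j : ZMod n, Wmat n i j * Xmat n j k = psi n (j * (i - k)) := by
    intro j
    show psi n (j * i) * psi n (-(j * k)) = psi n (j * (i - k))
    rw [← psi_add, show j * i + -(j * k) = j * (i - k) by ring]
  simp_rw [h1, sum_psi, Matrix.smul_apply, Matrix.one_apply, sub_eq_zero]
  by_cases h : i = k <;> simp [h]

lemma XW_eq : Xmat n * Wmat n = (n : ℂ) • 1 := by
  ext i k
  rw [Matrix.mul_apply]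
  have h1 : ∀ j : ZMod n, Xmat n i j * Wmat n j k = psi n (j * (k - i)) := by
    intro j
    show psi n (-(i * j)) * psi n (k * j) = psi n (j * (k - i))
    rw [← psi_add, show -(i * j) + k * j = j * (k - i) by ring]
  simp_rw [h1, sum_psi, Matrix.smul_apply, Matrix.one_apply, sub_eq_zero]
  by_cases h : i = k <;> simp [h, eq_comm]

lemma Mc_apply (i k : ZMod n) :
    ((distMatrix (ICG n D)).map Complex.ofReal) i k = ccf n D (k - i) := by
  simp only [Matrix.map_apply, distMatrix, Matrix.of_apply, ccf]
  rw [dist_translate D i k]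
  push_cast
  ring

lemma MW_eq : (distMatrix (ICG n D)).map Complex.ofReal * Wmat n
    = Wmat n * Matrix.diagonal (lam n D) := by
  ext i j
  rw [Matrix.mul_apply, Matrix.mul_diagonal]
  have h1 : ∀ k : ZMod n, ((distMatrix (ICG n D)).map Complex.ofReal) i k * Wmat n k j
      = ccf n D (k - i) * psi n (j * k) := by
    intro k; rw [Mc_apply]; rfl
  simp_rw [h1]
  have h2 : ∑ k : ZMod n, ccf n D (k - i) * psi n (j * k)
      = ∑ m : ZMod n, ccf n D m * (psi n (j * i) * psi n (j * m)) :=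
    (Fintype.sum_equiv (Equiv.addLeft i)
      (fun m => ccf n D m * (psi n (j * i) * psi n (j * m)))
      (fun k => ccf n D (k - i) * psi n (j * k))
      (fun m => by
        simp only [Equiv.coe_addLeft]
        rw [add_sub_cancel_left, mul_add, psi_add])).symm
  rw [h2]
  show _ = psi n (j * i) * lam n D j
  unfold lam
  rw [Finset.mul_sum]
  exact Finset.sum_congr rfl fun m _ => by ring

lemma T_int (j : ZMod n) (e : ℕ) (he : e ∣ n) (he0 : 0 < e) :
    (∑ m ∈ Finset.univ.filter (fun m : ZMod n => e ∣ m.val), psi n (j * m))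
      ∈ (Int.castRingHom ℂ).range := by
  have hnpos : 0 < n := Nat.pos_of_ne_zero (NeZero.ne n)
  have hsum : (∑ m ∈ Finset.univ.filter (fun m : ZMod n => e ∣ m.val), psi n (j * m))
      = ∑ t ∈ Finset.range (n / e), psi n (j * (e : ZMod n)) ^ t := by
    refine Finset.sum_nbij' (fun m => m.val / e) (fun t => ((e * t : ℕ) : ZMod n))
      ?_ ?_ ?_ ?_ ?_
    · intro m hm
      rw [Finset.mem_range]
      exact Nat.div_lt_div_of_lt_of_dvd he (ZMod.val_lt m)
    · intro t ht
      rw [Finset.mem_range] at ht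
      have hlt : e * t < n := by
        have h := Nat.mul_lt_mul_of_pos_left ht he0
        rwa [Nat.mul_div_cancel' he] at h
      simp only [Finset.mem_filter]
      exact ⟨Finset.mem_univ _, by rw [ZMod.val_cast_of_lt hlt]; exact Dvd.intro t rfl⟩
    · intro m hm
      have hm2 : e ∣ m.val := by simpa using hm
      show ((e * (m.val / e) : ℕ) : ZMod n) = m
      rw [Nat.mul_div_cancel' hm2]
      exact ZMod.natCast_rightInverse m
    · intro t ht
      rw [Finset.mem_range] at ht
      have hlt : e * t < n := by
        have h := Nat.mul_lt_mul_of_pos_left ht he0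
        rwa [Nat.mul_div_cancel' he] at h
      show ((e * t : ℕ) : ZMod n).val / e = t
      rw [ZMod.val_cast_of_lt hlt, Nat.mul_div_cancel_left t he0]
    · intro m hm
      have hm2 : e ∣ m.val := by simpa using hm
      show psi n (j * m) = psi n (j * (e : ZMod n)) ^ (m.val / e)
      conv_lhs => rw [show m = ((e * (m.val / e) : ℕ) : ZMod n) by
        rw [Nat.mul_div_cancel' hm2]; exact (ZMod.natCast_rightInverse m).symm]
      rw [Nat.cast_mul, ← mul_assoc, psi_natmul]
  rw [hsum]
  set ω := psi n (j * (e : ZMod n)) with hω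
  have hωpow : ω ^ (n / e) = 1 := by
    rw [hω, ← psi_natmul]
    rw [show j * (e : ZMod n) * ((n / e : ℕ) : ZMod n) = j * (((e * (n / e) : ℕ)) : ZMod n) by
      push_cast; ring]
    rw [Nat.mul_div_cancel' he, ZMod.natCast_self, mul_zero, psi_zero]
  by_cases hω1 : ω = 1
  · refine ⟨Int.ofNat (n / e), ?_⟩
    simp only [hω1, one_pow, Finset.sum_const, Finset.card_range, nsmul_eq_mul, mul_one]
    norm_cast
  · have hne : ω - 1 ≠ 0 := sub_ne_zero.mpr hω1
    have := geom_sum_mul ω (n / e)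
    rw [hωpow, sub_self] at this
    rw [(mul_eq_zero.mp this).resolve_right hne]
    exact ⟨0, by simp⟩

lemma S_int (j : ZMod n) : ∀ N : ℕ, ∀ e ∈ n.divisors, n / e ≤ N →
    (∑ m ∈ Finset.univ.filter (fun m : ZMod n => Nat.gcd m.val n = e), psi n (j * m))
      ∈ (Int.castRingHom ℂ).range := by
  have hnpos : 0 < n := Nat.pos_of_ne_zero (NeZero.ne n)
  intro N
  induction N with
  | zero =>
    intro e he h0
    rw [Nat.mem_divisors] at he
    have : 0 < n / e := Nat.div_pos (Nat.le_of_dvd hnpos he.1)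
      (Nat.pos_of_dvd_of_pos he.1 hnpos)
    omega
  | succ N ih =>
    intro e he hle
    rw [Nat.mem_divisors] at he
    have he0 : 0 < e := Nat.pos_of_dvd_of_pos he.1 hnpos
    set s' := n.divisors.filter (fun f => e ∣ f) with hs'
    have hsplit : (∑ m ∈ Finset.univ.filter (fun m : ZMod n => e ∣ m.val), psi n (j * m))
        = ∑ f ∈ s', ∑ m ∈ Finset.univ.filter
            (fun m : ZMod n => Nat.gcd m.val n = f), psi n (j * m) := by
      rw [← Finset.sum_fiberwise_of_maps_to (g := fun m : ZMod n => Nat.gcd m.val n)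
        (t := s') ?_ (fun m => psi n (j * m))]
      · apply Finset.sum_congr rfl
        intro f hf
        rw [hs', Finset.mem_filter] at hf
        congr 1
        ext m
        simp only [Finset.mem_filter, Finset.mem_univ, true_and]
        constructor
        · rintro ⟨-, h2⟩; exact h2
        · intro h2
          refine ⟨?_, h2⟩
          exact dvd_trans hf.2 (h2 ▸ Nat.gcd_dvd_left m.val n)
      · intro m hm
        rw [Finset.mem_filter] at hm
        rw [hs', Finset.mem_filter, Nat.mem_divisors]
        exact ⟨⟨Nat.gcd_dvd_right _ _, hnpos.ne'⟩, Nat.dvd_gcd hm.2 he.1⟩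
    have he_mem : e ∈ s' := by
      rw [hs', Finset.mem_filter, Nat.mem_divisors]
      exact ⟨⟨he.1, he.2⟩, dvd_refl e⟩
    have hT := T_int j e he.1 he0
    rw [hsplit, ← Finset.add_sum_erase s' _ he_mem] at hT
    have hrest : (∑ f ∈ s'.erase e, ∑ m ∈ Finset.univ.filter
        (fun m : ZMod n => Nat.gcd m.val n = f), psi n (j * m))
        ∈ (Int.castRingHom ℂ).range := by
      apply Subring.sum_mem
      intro f hf
      have hf' := hf
      rw [Finset.mem_erase, hs', Finset.mem_filter, Nat.mem_divisors] at hf'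
      obtain ⟨hfe, ⟨⟨hfn, -⟩, hef⟩⟩ := hf'
      have hf0 : 0 < f := Nat.pos_of_dvd_of_pos hfn hnpos
      -- n / f < n / e
      have hlt : n / f < n / e := by
        set k := f / e with hk
        have hfk : f = e * k := (Nat.mul_div_cancel' hef).symm
        have hk2 : 2 ≤ k := by
          rcases Nat.lt_or_ge k 2 with h | h
          · interval_cases k <;> omega
          · exact h
        have hdiv : n / e = k * (n / f) := by
          have h1 : e * (k * (n / f)) = n := by
            rw [← mul_assoc, ← hfk, Nat.mul_div_cancel' hfn]
          calc n / e = (e * (k * (n / f))) / e := by rw [h1]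
          _ = k * (n / f) := Nat.mul_div_cancel_left _ he0
        have h3 : 1 ≤ n / f := Nat.div_pos (Nat.le_of_dvd hnpos hfn) hf0
        have h4 : 2 * (n / f) ≤ k * (n / f) := Nat.mul_le_mul_right _ hk2
        omega
      exact ih f (Nat.mem_divisors.mpr ⟨hfn, hnpos.ne'⟩) (by omega)
    have := Subring.sub_mem _ hT hrest
    simpa using this

lemma lam_int (j : ZMod n) : ∃ z : ℤ, lam n D j = (z : ℂ) := by
  have hnpos : 0 < n := Nat.pos_of_ne_zero (NeZero.ne n)
  have hsplit : lam n D j = ∑ e ∈ n.divisors, ccf n D ((e : ℕ) : ZMod n) *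
      ∑ m ∈ Finset.univ.filter (fun m : ZMod n => Nat.gcd m.val n = e), psi n (j * m) := by
    unfold lam
    rw [← Finset.sum_fiberwise_of_maps_to (g := fun m : ZMod n => Nat.gcd m.val n)
      (t := n.divisors) ?_ (fun m => ccf n D m * psi n (j * m))]
    · apply Finset.sum_congr rfl
      intro e he
      rw [Finset.mul_sum]
      apply Finset.sum_congr rfl
      intro m hm
      rw [Finset.mem_filter] at hm
      rw [ccf_gcd D m, hm.2]
    · intro m _
      exact Nat.mem_divisors.mpr ⟨Nat.gcd_dvd_right _ _, hnpos.ne'⟩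
  have hmem : lam n D j ∈ (Int.castRingHom ℂ).range := by
    rw [hsplit]
    apply Subring.sum_mem
    intro e he
    apply Subring.mul_mem
    · exact ⟨((ICG n D).dist 0 ((e : ℕ) : ZMod n) : ℤ), by simp [ccf]⟩
    · exact S_int j (n / e) e he (le_refl _)
  obtain ⟨z, hz⟩ := hmem
  exact ⟨z, hz.symm⟩

end Part4

/-- a connected integral circulant graph has integral distance spectrum:
every eigenvalue of its distance matrix is an integer. -/
theorem distance_spectrum_of_ICG_integral (n : ℕ) [NeZero n] (hn : 1 < n) (D : Finset ℕ)
    (hD : D.Nonempty) (hdvd : ∀ d ∈ D, d ∣ n ∧ 0 < d ∧ d < n) (hgcd : D.gcd id = 1) :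
    ∀ μ ∈ spectrum ℝ (distMatrix (ICG n D)), ∃ z : ℤ, μ = (z : ℝ) := by
  intro μ hμ
  set M := distMatrix (ICG n D) with hM
  -- step 1: real determinant vanishes
  have h1 : ¬IsUnit (algebraMap ℝ (Matrix (ZMod n) (ZMod n) ℝ) μ - M) :=
    spectrum.mem_iff.mp hμ
  have hdet : (Matrix.diagonal (fun _ : ZMod n => μ) - M).det = 0 := by
    by_contra h
    apply h1
    rw [Matrix.algebraMap_eq_diagonal]
    rw [Matrix.isUnit_iff_isUnit_det]
    have : (Matrix.diagonal ((algebraMap ℝ (ZMod n → ℝ)) μ) - M)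
        = Matrix.diagonal (fun _ : ZMod n => μ) - M := by
      congr 1
    rw [this]
    exact isUnit_iff_ne_zero.mpr h
  -- step 2: complex determinant vanishes
  set Mc := M.map Complex.ofReal with hMc
  have hgen : ∀ A : Matrix (ZMod n) (ZMod n) ℝ,
      (A.map Complex.ofReal).det = ((A.det : ℝ) : ℂ) := by
    intro A
    have h := RingHom.map_det Complex.ofRealHom A
    rw [RingHom.mapMatrix_apply] at h
    exact h.symm
  have hdetC : (Matrix.diagonal (fun _ : ZMod n => (μ : ℂ)) - Mc).det = 0 := by
    have hmap : (Matrix.diagonal (fun _ : ZMod n => μ) - M).map Complex.ofReal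
        = Matrix.diagonal (fun _ : ZMod n => (μ : ℂ)) - Mc := by
      rw [Matrix.map_sub _ (by simp [Complex.ofReal_sub])]
      congr 1
      rw [Matrix.diagonal_map (by simp)]
    rw [← hmap, hgen, hdet]
    simp
  -- step 3: diagonalize
  have hnne : (n : ℂ) ≠ 0 := Nat.cast_ne_zero.mpr (NeZero.ne n)
  set W := Wmat n with hW
  set Wi := (n : ℂ)⁻¹ • Xmat n with hWi
  have hWWi : W * Wi = 1 := by
    rw [hWi, mul_smul_comm, WX_eq, smul_smul, inv_mul_cancel₀ hnne, one_smul]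
  have hWiW : Wi * W = 1 := by
    rw [hWi, smul_mul_assoc, XW_eq, smul_smul, inv_mul_cancel₀ hnne, one_smul]
  have hMcW : Mc = W * Matrix.diagonal (lam n D) * Wi := by
    calc Mc = Mc * (W * Wi) := by rw [hWWi, mul_one]
    _ = (Mc * W) * Wi := by rw [mul_assoc]
    _ = (W * Matrix.diagonal (lam n D)) * Wi := by rw [hMc, hM, MW_eq]
  have hconst : W * Matrix.diagonal (fun _ : ZMod n => (μ : ℂ)) * Wi
      = Matrix.diagonal (fun _ : ZMod n => (μ : ℂ)) := by
    have e1 : W * ((μ : ℂ) • (1 : Matrix (ZMod n) (ZMod n) ℂ)) = (μ : ℂ) • W := by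
      rw [mul_smul_comm, mul_one]
    rw [← Matrix.smul_one_eq_diagonal, e1, smul_mul_assoc, hWWi]
  have hfactor : Matrix.diagonal (fun _ : ZMod n => (μ : ℂ)) - Mc
      = W * Matrix.diagonal (fun k => (μ : ℂ) - lam n D k) * Wi := by
    have hd : Matrix.diagonal (fun k : ZMod n => (μ : ℂ) - lam n D k)
        = Matrix.diagonal (fun _ : ZMod n => (μ : ℂ)) - Matrix.diagonal (lam n D) :=
      (Matrix.diagonal_sub _ _).symm
    rw [hd, mul_sub, sub_mul, hconst, ← hMcW]
  have hdet2 : (Matrix.diagonal (fun k : ZMod n => (μ : ℂ) - lam n D k)).det = 0 := by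
    have h := hdetC
    rw [hfactor, Matrix.det_mul, Matrix.det_mul] at h
    have hWdet : W.det * Wi.det = 1 := by
      rw [← Matrix.det_mul, hWWi, Matrix.det_one]
    have : W.det * (Matrix.diagonal (fun k : ZMod n => (μ : ℂ) - lam n D k)).det * Wi.det
        = (Matrix.diagonal (fun k : ZMod n => (μ : ℂ) - lam n D k)).det * (W.det * Wi.det) := by
      ring
    rw [this, hWdet, mul_one] at h
    exact h
  rw [Matrix.det_diagonal] at hdet2
  obtain ⟨k, -, hk⟩ := Finset.prod_eq_zero_iff.mp hdet2
  obtain ⟨z, hz⟩ := lam_int D k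
  refine ⟨z, ?_⟩
  have hμk : (μ : ℂ) = lam n D k := sub_eq_zero.mp hk
  rw [hz] at hμk
  exact_mod_cast hμk
end

section
/- Let n be an odd composite number. Then the largest eigenvalue (distance spectral radius) of the distance matrix of the unitary Cayley graph X_n equals 2(n − 1) − φ(n), where φ is Euler's totient function. -/
open scoped Classical

-- aux

lemma isUnit_intCast_iff {n : ℕ} [NeZero n] (x : ℤ) :
    IsUnit ((x : ℤ) : ZMod n) ↔ Int.gcd x n = 1 := by
  rw [← Int.isCoprime_iff_gcd_eq_one]
  constructor
  · intro h
    obtain ⟨b, hb⟩ := isUnit_iff_exists_inv.mp h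
    obtain ⟨y, rfl⟩ := ZMod.intCast_surjective b
    have h0 : ((x * y - 1 : ℤ) : ZMod n) = 0 := by push_cast; rw [hb]; ring
    rw [ZMod.intCast_zmod_eq_zero_iff_dvd] at h0
    obtain ⟨k, hk⟩ := h0
    exact ⟨y, -k, by linarith⟩
  · rintro ⟨u, v, huv⟩
    apply IsUnit.of_mul_eq_one ((u : ℤ) : ZMod n)
    have h0 := congrArg (fun t : ℤ => (t : ZMod n)) huv
    push_cast at h0
    rw [ZMod.natCast_self, mul_zero, add_zero] at h0
    rw [mul_comm] at h0
    simpa using h0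

lemma ICG_adj {n : ℕ} [NeZero n] (a b : ZMod n) :
    (ICG n {1}).Adj a b ↔ a ≠ b ∧ IsUnit (a - b) := by
  have key : (((a.val : ℤ) - (b.val : ℤ) : ℤ) : ZMod n) = a - b := by
    push_cast
    rw [ZMod.natCast_rightInverse a, ZMod.natCast_rightInverse b]
  change (a ≠ b ∧ Int.gcd ((a.val : ℤ) - (b.val : ℤ)) n ∈ ({1} : Finset ℕ)) ↔ _
  rw [Finset.mem_singleton, ← isUnit_intCast_iff ((a.val : ℤ) - (b.val : ℤ)), key]

lemma isUnit_pair {M N : Type*} [CommMonoid M] [CommMonoid N] {a : M} {b : N}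
    (ha : IsUnit a) (hb : IsUnit b) : IsUnit ((a, b) : M × N) := by
  obtain ⟨c, hc⟩ := isUnit_iff_exists_inv.mp ha
  obtain ⟨d, hd⟩ := isUnit_iff_exists_inv.mp hb
  exact isUnit_iff_exists_inv.mpr ⟨(c, d), by rw [Prod.mk_mul_mk, hc, hd]; rfl⟩

lemma exists_isUnit_sub : ∀ (n : ℕ), Odd n → ∀ d : ZMod n, ∃ u : ZMod n, IsUnit u ∧ IsUnit (d - u) := by
  intro n
  induction n using Nat.recOnPosPrimePosCoprime with
  | prime_pow p k hpp hk =>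
    intro hodd d
    haveI : Fact p.Prime := ⟨hpp⟩
    haveI : NeZero (p ^ k) := ⟨pow_ne_zero _ hpp.ne_zero⟩
    have hp2 : p ≠ 2 := by
      rintro rfl
      exact (Nat.not_odd_iff_even.mpr (Nat.even_pow.mpr ⟨even_two, hk.ne'⟩)) hodd
    set π : ZMod (p ^ k) →+* ZMod p := ZMod.castHom (dvd_pow_self p hk.ne') (ZMod p) with hπ
    have hu : ∀ x : ZMod (p ^ k), π x ≠ 0 → IsUnit x := by
      intro x hx
      have hxv : ((x.val : ℕ) : ZMod (p ^ k)) = x := ZMod.natCast_rightInverse x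
      have hπx : π x = ((x.val : ℕ) : ZMod p) := by
        conv_lhs => rw [← hxv]
        rw [map_natCast]
      rw [hπx, Ne, ZMod.natCast_eq_zero_iff] at hx
      have hcop : Nat.Coprime x.val p := (Nat.coprime_comm.mp
        ((Nat.Prime.coprime_iff_not_dvd hpp).mpr hx))
      have : IsUnit ((x.val : ℕ) : ZMod (p ^ k)) :=
        (ZMod.isUnit_iff_coprime x.val (p ^ k)).mpr (hcop.pow_right k)
      rwa [hxv] at this
    have h2 : π 2 = 2 := map_ofNat π 2
    have h2ne : ((2 : ℕ) : ZMod p) ≠ 0 := by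
      rw [Ne, ZMod.natCast_eq_zero_iff]
      intro hdvd
      exact hp2 ((Nat.prime_dvd_prime_iff_eq hpp Nat.prime_two).mp hdvd)
    by_cases h : π (d - 1) = 0
    · refine ⟨2, hu 2 ?_, hu (d - 2) ?_⟩
      · rw [h2]; simpa using h2ne
      · have hd : π d = 1 := by rwa [map_sub, map_one, sub_eq_zero] at h
        rw [map_sub, hd, h2]
        intro hcon
        have : (1 : ZMod p) = 2 := by linear_combination hcon
        have : ((1 : ℕ) : ZMod p) = ((2 : ℕ) : ZMod p) := by push_cast; exact this
        rw [ZMod.natCast_eq_natCast_iff'] at this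
        have hp3 : 2 < p := lt_of_le_of_ne hpp.two_le (Ne.symm hp2)
        rw [Nat.mod_eq_of_lt (by omega), Nat.mod_eq_of_lt (by omega)] at this
        omega
    · exact ⟨1, isUnit_one, hu _ h⟩
  | zero => intro hodd; simp [Nat.odd_iff] at hodd
  | one =>
    intro _ d
    refine ⟨1, isUnit_one, ?_⟩
    rw [Subsingleton.elim (d - 1) 1]
    exact isUnit_one
  | coprime a b ha hb hab iha ihb =>
    intro hodd d
    rw [Nat.odd_mul] at hodd
    set e := ZMod.chineseRemainder hab with he
    obtain ⟨u1, hu1, hv1⟩ := iha hodd.1 (e d).1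
    obtain ⟨u2, hu2, hv2⟩ := ihb hodd.2 (e d).2
    refine ⟨e.symm (u1, u2), ?_, ?_⟩
    · exact (isUnit_pair hu1 hu2).map e.symm
    · have hmap : e.symm (e d - (u1, u2)) = d - e.symm (u1, u2) := by
        rw [map_sub, e.symm_apply_apply]
      have hun : IsUnit (e d - (u1, u2)) := by
        have : e d - (u1, u2) = (((e d).1 - u1, (e d).2 - u2) : ZMod a × ZMod b) := rfl
        rw [this]
        exact isUnit_pair hv1 hv2
      have := hun.map e.symm
      rwa [hmap] at this

lemma dist_ICG {n : ℕ} [NeZero n] (hn : 1 < n) (hodd : Odd n) (a b : ZMod n) :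
    (ICG n {1}).dist a b = if a = b then 0 else if IsUnit (a - b) then 1 else 2 := by
  haveI : Fact (1 < n) := ⟨hn⟩
  rcases eq_or_ne a b with rfl | hab
  · simp [SimpleGraph.dist_self]
  obtain ⟨u, hu, hdu⟩ := exists_isUnit_sub n hodd (a - b)
  have hadj1 : (ICG n {1}).Adj a (a - u) := by
    rw [ICG_adj]
    refine ⟨fun h => hu.ne_zero ?_, by simpa [sub_sub_cancel] using hu⟩
    have := sub_eq_self.mp h.symm
    exact this
  have hadj2 : (ICG n {1}).Adj (a - u) b := by
    rw [ICG_adj]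
    have heq : (a - u) - b = (a - b) - u := by ring
    refine ⟨fun h => hdu.ne_zero ?_, by rwa [heq]⟩
    rw [← heq, h, sub_self]
  have hw2 : (ICG n {1}).dist a b ≤ 2 := by
    have := SimpleGraph.dist_le
      (SimpleGraph.Walk.cons hadj1 (SimpleGraph.Walk.cons hadj2 SimpleGraph.Walk.nil))
    simpa using this
  by_cases hadj : IsUnit (a - b)
  · have : (ICG n {1}).Adj a b := (ICG_adj a b).mpr ⟨hab, hadj⟩
    simp [hab, hadj, SimpleGraph.dist_eq_one_iff_adj.mpr this]
  · have hreach : (ICG n {1}).Reachable a b :=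
      ⟨SimpleGraph.Walk.cons hadj1 (SimpleGraph.Walk.cons hadj2 SimpleGraph.Walk.nil)⟩
    have h1 : (ICG n {1}).dist a b ≠ 1 := by
      intro hcon
      rw [SimpleGraph.dist_eq_one_iff_adj, ICG_adj] at hcon
      exact hadj hcon.2
    have h0 : 0 < (ICG n {1}).dist a b := hreach.pos_dist_of_ne hab
    have h2 : (ICG n {1}).dist a b = 2 := by omega
    simp [hab, hadj, h2]

lemma sum_ite_isUnit (n : ℕ) [NeZero n] :
    ∑ x : ZMod n, (if IsUnit x then (1 : ℝ) else 0) = n.totient := by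
  rw [Finset.sum_boole]
  norm_cast
  rw [← Fintype.card_subtype, ← ZMod.card_units_eq_totient n]
  refine Fintype.card_congr
    ⟨fun (x : {x : ZMod n // IsUnit x}) => x.2.unit, fun u => ⟨(u : ZMod n), u.isUnit⟩,
      fun x => Subtype.ext x.2.unit_spec, fun u => Units.ext (IsUnit.unit_spec _)⟩

lemma rowSum {n : ℕ} [NeZero n] (hn : 1 < n) (hodd : Odd n) (i : ZMod n) :
    ∑ j, distMatrix (ICG n {1}) i j = 2 * ((n : ℝ) - 1) - (Nat.totient n : ℝ) := by
  haveI : Fact (1 < n) := ⟨hn⟩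
  have hterm : ∀ j, distMatrix (ICG n {1}) i j
      = 2 - (if IsUnit (i - j) then (1 : ℝ) else 0) - (if i = j then 2 else 0) := by
    intro j
    show ((ICG n {1}).dist i j : ℝ) = _
    rw [dist_ICG hn hodd]
    rcases eq_or_ne i j with rfl | h
    · simp
    · by_cases hu : IsUnit (i - j) <;> simp [h, hu] <;> norm_num
  rw [Finset.sum_congr rfl (fun j _ => hterm j)]
  have hre : ∑ j : ZMod n, (if IsUnit (i - j) then (1 : ℝ) else 0)
      = ∑ x : ZMod n, (if IsUnit x then (1 : ℝ) else 0) :=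
    Equiv.sum_comp (Equiv.subLeft i) (fun x => if IsUnit x then (1 : ℝ) else 0)
  rw [Finset.sum_sub_distrib, Finset.sum_sub_distrib, hre, sum_ite_isUnit,
    Finset.sum_ite_eq Finset.univ i (fun _ => (2 : ℝ)), Finset.sum_const]
  simp [ZMod.card n]
  ring

/-- for odd composite `n`, the distance spectral radius (largest eigenvalue of
the distance matrix) of the unitary Cayley graph `X_n` equals `2(n-1) - φ(n)`. -/
theorem unitaryCayley_odd_composite_spectral_radius (n : ℕ) [NeZero n] (hn : 1 < n)
    (hodd : Odd n) (hcomp : ¬ n.Prime) :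
    (2 * ((n : ℝ) - 1) - (Nat.totient n : ℝ)) ∈ spectrum ℝ (distMatrix (ICG n {1})) ∧
    ∀ μ ∈ spectrum ℝ (distMatrix (ICG n {1})),
      μ ≤ 2 * ((n : ℝ) - 1) - (Nat.totient n : ℝ) := by
  set D := distMatrix (ICG n {1}) with hD
  set r : ℝ := 2 * ((n : ℝ) - 1) - (Nat.totient n : ℝ) with hr
  have hrow : ∀ i, ∑ j, D i j = r := fun i => rowSum hn hodd i
  have hnonneg : ∀ i j, 0 ≤ D i j := fun i j => Nat.cast_nonneg _
  have hspec : spectrum ℝ (Matrix.toLinAlgEquiv' D) = spectrum ℝ D :=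
    AlgEquiv.spectrum_eq Matrix.toLinAlgEquiv' D
  constructor
  · rw [← hspec, ← Module.End.hasEigenvalue_iff_mem_spectrum]
    apply Module.End.hasEigenvalue_of_hasEigenvector (x := fun _ => (1 : ℝ))
    constructor
    · rw [Module.End.mem_eigenspace_iff]
      funext i
      show (Matrix.toLinAlgEquiv' D) (fun _ => (1 : ℝ)) i = _
      rw [Matrix.toLinAlgEquiv'_apply]
      show ∑ j, D i j * 1 = r * 1
      simp [hrow i]
    · intro h
      have := congrFun h 0
      simp at this
  · intro μ hμ
    rw [← hspec, ← Module.End.hasEigenvalue_iff_mem_spectrum] at hμ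
    obtain ⟨v, hv_mem, hv_ne⟩ := Submodule.exists_mem_ne_zero_of_ne_bot hμ
    have hv : (Matrix.toLinAlgEquiv' D) v = μ • v := Module.End.mem_eigenspace_iff.mp hv_mem
    rw [Matrix.toLinAlgEquiv'_apply] at hv
    obtain ⟨i, -, hi⟩ := Finset.exists_max_image Finset.univ (fun j => |v j|)
      ⟨0, Finset.mem_univ 0⟩
    have hvi : 0 < |v i| := by
      obtain ⟨j, hj⟩ := Function.ne_iff.mp hv_ne
      exact lt_of_lt_of_le (abs_pos.mpr hj) (hi j (Finset.mem_univ j))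
    have heq : μ * v i = ∑ j, D i j * v j := by
      have := congrFun hv i
      simp only [Pi.smul_apply, smul_eq_mul] at this
      rw [← this]
      rfl
    have key : μ * |v i| ≤ r * |v i| := by
      calc μ * |v i| ≤ |μ| * |v i| :=
            mul_le_mul_of_nonneg_right (le_abs_self μ) (abs_nonneg _)
        _ = |μ * v i| := (abs_mul μ (v i)).symm
        _ = |∑ j, D i j * v j| := by rw [heq]
        _ ≤ ∑ j, |D i j * v j| := Finset.abs_sum_le_sum_abs _ _
        _ ≤ ∑ j, D i j * |v i| := by
            refine Finset.sum_le_sum fun j _ => ?_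
            rw [abs_mul, abs_of_nonneg (hnonneg i j)]
            exact mul_le_mul_of_nonneg_left (hi j (Finset.mem_univ j)) (hnonneg i j)
        _ = r * |v i| := by rw [← Finset.sum_mul, hrow i]
    exact le_of_mul_le_mul_right key hvi
end

section
/- Let n be an even number having an odd prime divisor. Then the unitary Cayley graph X_n has diameter 3; moreover, the number of vertices at distance 2 from the vertex 0 is exactly n/2 − 1, and the number of vertices at distance 3 from the vertex 0 is exactly n/2 − φ(n). -/
open scoped Classical

lemma zmod_isUnit_iff {n : ℕ} [NeZero n] (x : ZMod n) : IsUnit x ↔ Nat.Coprime x.val n := by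
  constructor
  · intro h
    simpa using ZMod.val_coe_unit_coprime h.unit
  · intro h
    have : IsUnit ((x.val : ZMod n)) := (ZMod.isUnit_iff_coprime x.val n).mpr h
    simpa [ZMod.natCast_val, ZMod.cast_id] using this

lemma prod_isUnit {α β : Type} [Monoid α] [Monoid β] {a : α} {b : β}
    (ha : IsUnit a) (hb : IsUnit b) : IsUnit (a, b) :=
  ⟨⟨(a, b), (↑ha.unit⁻¹, ↑hb.unit⁻¹), by simp [Prod.ext_iff], by simp [Prod.ext_iff]⟩, rfl⟩

lemma exists_two_units : ∀ (n : ℕ), 0 < n → ∀ (v : ZMod n),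
    (2 ∣ n → ∃ w : ZMod n, v = w + w) → ∃ u : ZMod n, IsUnit u ∧ IsUnit (v - u) := by
  intro n
  induction n using Nat.strong_induction_on with
  | _ n ih =>
  intro hn v hv
  rcases eq_or_ne n 1 with rfl | h1
  · exact ⟨1, isUnit_one, by rw [Subsingleton.elim (v - 1) (1 : ZMod 1)]; exact isUnit_one⟩
  haveI : NeZero n := ⟨hn.ne'⟩
  have hp : n.minFac.Prime := Nat.minFac_prime h1
  have hpn : n.minFac ∣ n := Nat.minFac_dvd n
  have hk : 0 < n.factorization n.minFac :=
    Nat.Prime.factorization_pos_of_dvd hp hn.ne' hpn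
  have hab : n.minFac ^ n.factorization n.minFac * (n / n.minFac ^ n.factorization n.minFac) = n :=
    Nat.ordProj_mul_ordCompl_eq_self n n.minFac
  by_cases hb1 : n / n.minFac ^ n.factorization n.minFac = 1
  · -- prime power case
    have key : ∃ q j : ℕ, q.Prime ∧ 0 < j ∧ n = q ^ j :=
      ⟨n.minFac, n.factorization n.minFac, hp, hk, hab.symm.trans (by rw [hb1, mul_one])⟩
    clear hab hb1 hk hp hpn h1
    obtain ⟨q, j, hq, hj, rfl⟩ := key
    have hcrit : ∀ x : ZMod (q ^ j), IsUnit x ↔ ¬ q ∣ x.val := by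
      intro x
      rw [zmod_isUnit_iff, Nat.coprime_pow_right_iff hj, Nat.coprime_comm,
        Nat.Prime.coprime_iff_not_dvd hq]
    have hn2 : 1 < q ^ j := by
      calc 1 < q := hq.one_lt
      _ ≤ q ^ j := Nat.le_self_pow hj.ne' q
    haveI : Fact (1 < q ^ j) := ⟨hn2⟩
    by_cases hq2 : q = 2
    · -- q = 2
      subst hq2
      have h2n : 2 ∣ 2 ^ j := dvd_pow_self 2 hj.ne'
      obtain ⟨w, hw⟩ := hv h2n
      refine ⟨1, isUnit_one, (hcrit _).mpr ?_⟩
      have hv2 : v.val % 2 = 0 := by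
        rw [hw, ZMod.val_add, Nat.mod_mod_of_dvd _ h2n]
        omega
      have hrel : v.val = ((v - 1).val + 1) % (2 ^ j) := by
        conv_lhs => rw [show v = (v - 1) + 1 by ring]
        rw [ZMod.val_add, ZMod.val_one]
      have := Nat.mod_mod_of_dvd ((v - 1).val + 1) h2n
      omega
    · -- q odd prime
      have hq3 : 3 ≤ q := by
        have := hq.two_le
        omega
      have hqn : q ∣ q ^ j := dvd_pow_self q hj.ne'
      by_cases hpd : q ∣ (v - 1).val
      · refine ⟨2, (hcrit _).mpr ?_, (hcrit _).mpr ?_⟩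
        · have h2lt : 2 < q ^ j := lt_of_lt_of_le (by omega) (Nat.le_self_pow hj.ne' q)
          have hval2 : ((2 : ZMod (q ^ j))).val = 2 := by
            rw [show ((2 : ZMod (q ^ j))) = ((2 : ℕ) : ZMod (q ^ j)) by push_cast; ring,
              ZMod.val_cast_of_lt h2lt]
          rw [hval2]
          intro hd
          exact absurd (Nat.le_of_dvd (by norm_num) hd) (by omega)
        · intro hd2
          have hrel : (v - 1).val = ((v - 2).val + 1) % (q ^ j) := by
            conv_lhs => rw [show v - 1 = (v - 2) + 1 by ring]
            rw [ZMod.val_add, ZMod.val_one]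
          have h1' := Nat.mod_mod_of_dvd ((v - 2).val + 1) hqn
          obtain ⟨c, hc⟩ := hd2
          have hp1 : 1 % q = 1 := Nat.mod_eq_of_lt (by omega)
          have hcontra : (v - 1).val % q = 1 := by
            rw [hrel, h1', hc, Nat.mul_add_mod, hp1]
          obtain ⟨c', hc'⟩ := hpd
          rw [hc', Nat.mul_mod_right] at hcontra
          omega
      · exact ⟨1, isUnit_one, (hcrit _).mpr hpd⟩
  · -- composite case
    have hpk2 : 2 ≤ n.minFac ^ n.factorization n.minFac :=
      le_trans hp.two_le (Nat.le_self_pow hk.ne' _)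
    have hbpos : 0 < n / n.minFac ^ n.factorization n.minFac := Nat.pos_of_ne_zero (by
      intro h; rw [h, mul_zero] at hab; omega)
    have hb2 : 2 ≤ n / n.minFac ^ n.factorization n.minFac := by omega
    have hcop : Nat.Coprime (n.minFac ^ n.factorization n.minFac)
        (n / n.minFac ^ n.factorization n.minFac) :=
      Nat.Coprime.pow_left _ (Nat.coprime_ordCompl hp hn.ne')
    have key : ∃ a b : ℕ, 2 ≤ a ∧ 2 ≤ b ∧ Nat.Coprime a b ∧ a * b = n :=
      ⟨_, _, hpk2, hb2, hcop, hab⟩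
    clear hab hcop hb2 hbpos hpk2 hb1 hk hp hpn h1
    obtain ⟨a, b, ha2, hb2, hcop, rfl⟩ := key
    haveI : NeZero a := ⟨by omega⟩
    haveI : NeZero b := ⟨by omega⟩
    have haless : a < a * b := by nlinarith
    have hbless : b < a * b := by nlinarith
    set e := ZMod.chineseRemainder hcop with hedef
    obtain ⟨u₁, hu₁, hu₁'⟩ := ih a haless (by omega) (e v).1 (by
      intro h2
      obtain ⟨w, hw⟩ := hv (h2.mul_right b)
      exact ⟨(e w).1, by rw [hw, map_add]; rfl⟩)
    obtain ⟨u₂, hu₂, hu₂'⟩ := ih b hbless (by omega) (e v).2 (by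
      intro h2
      obtain ⟨w, hw⟩ := hv (h2.mul_left a)
      exact ⟨(e w).2, by rw [hw, map_add]; rfl⟩)
    refine ⟨e.symm (u₁, u₂), ?_, ?_⟩
    · exact (prod_isUnit hu₁ hu₂).map e.symm
    · have heq : v - e.symm (u₁, u₂) = e.symm (((e v).1 - u₁, (e v).2 - u₂)) := by
        apply e.injective
        rw [map_sub]
        simp only [RingEquiv.apply_symm_apply]
        ext <;> simp
      rw [heq]
      exact (prod_isUnit hu₁' hu₂').map e.symm

section Main

variable {n : ℕ}

lemma int_isUnit_iff [NeZero n] (z : ℤ) : IsUnit ((z : ZMod n)) ↔ Int.gcd z n = 1 := by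
  constructor
  · intro h
    obtain ⟨c, hc⟩ := h.exists_right_inv
    have hc' : ((z * (c.val : ℤ) - 1 : ℤ) : ZMod n) = 0 := by
      push_cast
      rw [ZMod.natCast_val, ZMod.cast_id, hc]
      ring
    have hdvd : (n : ℤ) ∣ z * (c.val : ℤ) - 1 := (ZMod.intCast_zmod_eq_zero_iff_dvd _ n).mp hc'
    have h1 : ((Int.gcd z n : ℕ) : ℤ) ∣ z * (c.val : ℤ) := dvd_mul_of_dvd_left (Int.gcd_dvd_left _ _) _
    have h2 : ((Int.gcd z n : ℕ) : ℤ) ∣ z * (c.val : ℤ) - 1 := dvd_trans (Int.gcd_dvd_right _ _) hdvd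
    have h3 : ((Int.gcd z n : ℕ) : ℤ) ∣ 1 := by
      have := dvd_sub h1 h2
      simpa using this
    have := Int.eq_one_of_dvd_one (by positivity) h3
    exact_mod_cast this
  · intro h
    obtain ⟨x, y, hxy⟩ := Int.isCoprime_iff_gcd_eq_one.mpr h
    apply IsUnit.of_mul_eq_one ((x : ZMod n))
    have : ((x * z + y * n : ℤ) : ZMod n) = 1 := by rw [hxy]; norm_cast
    push_cast at this
    rw [ZMod.natCast_self, mul_zero, add_zero] at this
    rw [mul_comm]
    exact this

lemma icg_adj_iff [NeZero n] (a b : ZMod n) :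
    (ICG n {1}).Adj a b ↔ a ≠ b ∧ IsUnit (a - b) := by
  show a ≠ b ∧ Int.gcd ((a.val : ℤ) - (b.val : ℤ)) n ∈ ({1} : Finset ℕ) ↔ _
  refine and_congr_right fun _ => ?_
  rw [Finset.mem_singleton, ← int_isUnit_iff]
  rw [show (((a.val : ℤ) - (b.val : ℤ) : ℤ) : ZMod n) = a - b by
    push_cast
    rw [ZMod.natCast_val, ZMod.cast_id, ZMod.natCast_val, ZMod.cast_id]]

end Main

section Dist

variable {n : ℕ} [NeZero n]

lemma enat_eq_two {x : ℕ∞} (hle : x ≤ 2) (h0 : x ≠ 0) (h1 : x ≠ 1) : x = 2 := by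
  have hne : x ≠ ⊤ := by rintro rfl; simp at hle
  lift x to ℕ using hne
  norm_cast at *
  omega

lemma enat_eq_three {x : ℕ∞} (hle : x ≤ 3) (h0 : x ≠ 0) (h1 : x ≠ 1) (h2 : x ≠ 2) : x = 3 := by
  have hne : x ≠ ⊤ := by rintro rfl; simp at hle
  lift x to ℕ using hne
  norm_cast at *
  omega

lemma par_add (heven : 2 ∣ n) (x y : ZMod n) : (x + y).val % 2 = (x.val + y.val) % 2 := by
  rw [ZMod.val_add, Nat.mod_mod_of_dvd _ heven]

lemma unit_val_odd (heven : 2 ∣ n) {v : ZMod n} (h : IsUnit v) : v.val % 2 = 1 := by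
  have hc := (zmod_isUnit_iff v).mp h
  rw [Nat.coprime_iff_gcd_eq_one] at hc
  rcases Nat.even_or_odd v.val with he | ho
  · exfalso
    have h2 : 2 ∣ Nat.gcd v.val n := Nat.dvd_gcd he.two_dvd heven
    omega
  · exact Nat.odd_iff.mp ho

lemma exists_units_eq (heven : 2 ∣ n) {v : ZMod n} (hv : v.val % 2 = 0) :
    ∃ u : ZMod n, IsUnit u ∧ IsUnit (v - u) := by
  apply exists_two_units n (NeZero.pos n) v
  intro _
  have h2 : ((v.val / 2 : ℕ) : ZMod n) + ((v.val / 2 : ℕ) : ZMod n) = v := by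
    rw [← Nat.cast_add, show v.val / 2 + v.val / 2 = v.val by omega,
      ZMod.natCast_val, ZMod.cast_id]
  exact ⟨_, h2.symm⟩

variable [Fact (1 < n)]

lemma adj_of_unit {a b : ZMod n} (hu : IsUnit (b - a)) : (ICG n {1}).Adj a b := by
  refine (icg_adj_iff a b).mpr ⟨?_, ?_⟩
  · intro h
    exact hu.ne_zero (by rw [h, sub_self])
  · rw [show a - b = -(b - a) by ring]
    exact hu.neg

lemma edist_le_two_of_even (heven : 2 ∣ n) {a b : ZMod n} (h : (b - a).val % 2 = 0) :
    (ICG n {1}).edist a b ≤ 2 := by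
  obtain ⟨u, hu, hu'⟩ := exists_units_eq heven h
  have a1 : (ICG n {1}).Adj a (a + u) := adj_of_unit (by simpa using hu)
  have a2 : (ICG n {1}).Adj (a + u) b :=
    adj_of_unit (by rw [show b - (a + u) = b - a - u by ring]; exact hu')
  have := SimpleGraph.edist_le (SimpleGraph.Walk.cons a1 (SimpleGraph.Walk.cons a2
    SimpleGraph.Walk.nil))
  simpa using this

lemma edist_le_three (heven : 2 ∣ n) (a b : ZMod n) : (ICG n {1}).edist a b ≤ 3 := by
  rcases eq_or_ne a b with rfl | hne
  · simp [SimpleGraph.edist_self]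
  by_cases hu : IsUnit (b - a)
  · have : (ICG n {1}).edist a b = 1 := SimpleGraph.edist_eq_one_iff_adj.mpr (adj_of_unit hu)
    rw [this]; norm_num
  by_cases hev : (b - a).val % 2 = 0
  · exact le_trans (edist_le_two_of_even heven hev) (by norm_num)
  -- odd difference
  have hpar : (b - 1 - a).val % 2 = 0 := by
    have hp := par_add heven ((b - a) - 1) 1
    rw [sub_add_cancel, ZMod.val_one] at hp
    rw [show b - 1 - a = b - a - 1 by ring]
    omega
  obtain ⟨u, hu1, hu2⟩ := exists_units_eq heven hpar
  have a1 : (ICG n {1}).Adj a (a + u) := adj_of_unit (by simpa using hu1)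
  have a2 : (ICG n {1}).Adj (a + u) (b - 1) :=
    adj_of_unit (by rw [show b - 1 - (a + u) = b - 1 - a - u by ring]; exact hu2)
  have hone : IsUnit (b - (b - 1)) := by
    rw [show b - (b - 1) = 1 by ring]
    exact isUnit_one
  have a3 : (ICG n {1}).Adj (b - 1) b := adj_of_unit hone
  have := SimpleGraph.edist_le (SimpleGraph.Walk.cons a1 (SimpleGraph.Walk.cons a2
    (SimpleGraph.Walk.cons a3 SimpleGraph.Walk.nil)))
  simpa using this

lemma not_adj_zero {v : ZMod n} (hu : ¬ IsUnit v) : ¬ (ICG n {1}).Adj 0 v := by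
  intro h
  obtain ⟨-, h2⟩ := (icg_adj_iff 0 v).mp h
  rw [zero_sub] at h2
  exact hu (by simpa using h2.neg)

lemma edist_zero_unit {v : ZMod n} (hu : IsUnit v) : (ICG n {1}).edist 0 v = 1 :=
  SimpleGraph.edist_eq_one_iff_adj.mpr (adj_of_unit (by simpa using hu))

lemma edist_zero_even (heven : 2 ∣ n) {v : ZMod n} (hv0 : v ≠ 0) (hev : v.val % 2 = 0) :
    (ICG n {1}).edist 0 v = 2 := by
  have hev' : (v - 0).val % 2 = 0 := by simpa using hev
  refine enat_eq_two (edist_le_two_of_even heven hev') ?_ ?_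
  · rw [ne_eq, SimpleGraph.edist_eq_zero_iff]
    exact fun h => hv0 h.symm
  · rw [ne_eq, SimpleGraph.edist_eq_one_iff_adj]
    apply not_adj_zero
    intro hu
    have := unit_val_odd heven hu
    omega

lemma edist_zero_odd (heven : 2 ∣ n) {v : ZMod n} (hodd : v.val % 2 = 1) (hu : ¬ IsUnit v) :
    (ICG n {1}).edist 0 v = 3 := by
  have hv0 : v ≠ 0 := by
    intro h
    rw [h, ZMod.val_zero] at hodd
    omega
  refine enat_eq_three (edist_le_three heven 0 v) ?_ ?_ ?_
  · rw [ne_eq, SimpleGraph.edist_eq_zero_iff]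
    exact fun h => hv0 h.symm
  · rw [ne_eq, SimpleGraph.edist_eq_one_iff_adj]
    exact not_adj_zero hu
  · intro h2
    obtain ⟨p, hp⟩ := SimpleGraph.exists_walk_of_edist_eq_coe (k := 2) (by exact_mod_cast h2)
    cases p with
    | nil => simp at hp
    | cons h q =>
      cases q with
      | nil => simp at hp
      | @cons _ c _ h' q' =>
        have hq' : q'.length = 0 := by
          simp only [SimpleGraph.Walk.length_cons] at hp
          omega
        have hcv := SimpleGraph.Walk.eq_of_length_eq_zero hq'
        rw [hcv] at h'
        rename_i m _
        -- h : Adj 0 m, h' : Adj m v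
        have hm : IsUnit m := by
          obtain ⟨-, hI⟩ := (icg_adj_iff 0 m).mp h
          rw [zero_sub] at hI
          simpa using hI.neg
        have hmv : IsUnit (m - v) := ((icg_adj_iff m v).mp h').2
        have hmodd := unit_val_odd heven hm
        have hmvodd := unit_val_odd heven hmv
        have hpa := par_add heven v (m - v)
        rw [add_sub_cancel] at hpa
        omega

end Dist

section Count

variable {n : ℕ} [NeZero n]

lemma card_range_even (hn : 2 ∣ n) :
    ((Finset.range n).filter (fun m => m % 2 = 0)).card = n / 2 := by
  have himg : (Finset.range n).filter (fun m => m % 2 = 0) =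
      (Finset.range (n / 2)).image (fun k => 2 * k) := by
    ext m
    simp only [Finset.mem_coe, Finset.mem_filter, Finset.mem_range, Finset.mem_image]
    constructor
    · rintro ⟨hm, hp⟩
      exact ⟨m / 2, by omega, by omega⟩
    · rintro ⟨k, hk, rfl⟩
      omega
  rw [himg, Finset.card_image_of_injective _ (fun a b h => by omega), Finset.card_range]

lemma card_zmod_even (heven : 2 ∣ n) :
    (Finset.univ.filter (fun v : ZMod n => v.val % 2 = 0)).card = n / 2 := by
  rw [← card_range_even heven]
  apply Finset.card_nbij' (i := ZMod.val) (j := fun m => ((m : ℕ) : ZMod n))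
  · intro v hv
    simp only [Finset.mem_coe, Finset.mem_filter, Finset.mem_univ, true_and] at hv
    simp only [Finset.mem_coe, Finset.mem_filter, Finset.mem_range]
    exact ⟨ZMod.val_lt v, hv⟩
  · intro m hm
    simp only [Finset.mem_coe, Finset.mem_filter, Finset.mem_range] at hm
    simp only [Finset.mem_coe, Finset.mem_filter, Finset.mem_univ, true_and]
    rw [ZMod.val_cast_of_lt hm.1]
    exact hm.2
  · intro v _
    simp [ZMod.natCast_val, ZMod.cast_id]
  · intro m hm
    simp only [Finset.mem_coe, Finset.mem_filter, Finset.mem_range] at hm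
    exact ZMod.val_cast_of_lt hm.1

lemma card_zmod_odd (heven : 2 ∣ n) :
    (Finset.univ.filter (fun v : ZMod n => v.val % 2 = 1)).card = n / 2 := by
  have hsplit := Finset.card_filter_add_card_filter_not
    (s := (Finset.univ : Finset (ZMod n))) (p := fun v : ZMod n => v.val % 2 = 0)
  have hcongr : (Finset.univ.filter (fun v : ZMod n => ¬ v.val % 2 = 0)) =
      (Finset.univ.filter (fun v : ZMod n => v.val % 2 = 1)) :=
    Finset.filter_congr (fun v _ => by omega)
  rw [hcongr, card_zmod_even heven, Finset.card_univ, ZMod.card] at hsplit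
  omega

lemma card_zmod_units : (Finset.univ.filter (fun v : ZMod n => IsUnit v)).card = n.totient := by
  rw [Nat.totient]
  apply Finset.card_nbij' (i := ZMod.val) (j := fun m => ((m : ℕ) : ZMod n))
  · intro v hv
    simp only [Finset.mem_coe, Finset.mem_filter, Finset.mem_univ, true_and] at hv
    simp only [Finset.mem_coe, Finset.mem_filter, Finset.mem_range]
    exact ⟨ZMod.val_lt v, Nat.coprime_comm.mp ((zmod_isUnit_iff v).mp hv)⟩
  · intro m hm
    simp only [Finset.mem_coe, Finset.mem_filter, Finset.mem_range] at hm
    simp only [Finset.mem_coe, Finset.mem_filter, Finset.mem_univ, true_and]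
    apply (zmod_isUnit_iff _).mpr
    rw [ZMod.val_cast_of_lt hm.1]
    exact Nat.coprime_comm.mp hm.2
  · intro v _
    simp [ZMod.natCast_val, ZMod.cast_id]
  · intro m hm
    simp only [Finset.mem_coe, Finset.mem_filter, Finset.mem_range] at hm
    exact ZMod.val_cast_of_lt hm.1

lemma card_dist_two (heven : 2 ∣ n) :
    (Finset.univ.filter (fun v : ZMod n => v ≠ 0 ∧ v.val % 2 = 0)).card = n / 2 - 1 := by
  have herase : (Finset.univ.filter (fun v : ZMod n => v ≠ 0 ∧ v.val % 2 = 0)) =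
      (Finset.univ.filter (fun v : ZMod n => v.val % 2 = 0)).erase 0 := by
    ext v
    simp only [Finset.mem_coe, Finset.mem_filter, Finset.mem_univ, true_and, Finset.mem_erase]
  have hmem : (0 : ZMod n) ∈ Finset.univ.filter (fun v : ZMod n => v.val % 2 = 0) := by
    simp [ZMod.val_zero]
  rw [herase, Finset.card_erase_of_mem hmem, card_zmod_even heven]

lemma card_dist_three (heven : 2 ∣ n) :
    (Finset.univ.filter (fun v : ZMod n => v.val % 2 = 1 ∧ ¬ IsUnit v)).card
      = n / 2 - n.totient := by
  have hsplit := Finset.card_filter_add_card_filter_not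
    (s := Finset.univ.filter (fun v : ZMod n => v.val % 2 = 1)) (p := fun v : ZMod n => IsUnit v)
  rw [Finset.filter_filter, Finset.filter_filter] at hsplit
  have h1 : (Finset.univ.filter (fun v : ZMod n => v.val % 2 = 1 ∧ IsUnit v)) =
      (Finset.univ.filter (fun v : ZMod n => IsUnit v)) :=
    Finset.filter_congr (fun v _ => ⟨And.right, fun h => ⟨unit_val_odd heven h, h⟩⟩)
  rw [h1, card_zmod_units, card_zmod_odd heven] at hsplit
  omega

end Count

theorem unitaryCayley_even_diameter_three' (n : ℕ) [NeZero n] (heven : 2 ∣ n)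
    (hodd : ∃ p : ℕ, p.Prime ∧ Odd p ∧ p ∣ n) :
    (ICG n {1}).diam = 3 ∧
    {v : ZMod n | (ICG n {1}).dist 0 v = 2}.ncard = n / 2 - 1 ∧
    {v : ZMod n | (ICG n {1}).dist 0 v = 3}.ncard = n / 2 - Nat.totient n := by
  obtain ⟨p, hp, hpodd, hpn⟩ := hodd
  have hp2 := hp.two_le
  have hpo : p % 2 = 1 := Nat.odd_iff.mp hpodd
  have hp3 : 3 ≤ p := by omega
  have hpltn : p < n := by
    have h1 : p ≤ n := Nat.le_of_dvd (NeZero.pos n) hpn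
    rcases eq_or_lt_of_le h1 with rfl | h
    · obtain ⟨c, hc⟩ := heven
      omega
    · exact h
  have hn2 : 2 < n := by omega
  haveI : Fact (1 < n) := ⟨by omega⟩
  -- the special vertex at distance 3
  set v₀ : ZMod n := ((p : ℕ) : ZMod n) with hv₀def
  have hv₀val : v₀.val = p := ZMod.val_cast_of_lt hpltn
  have hv₀odd : v₀.val % 2 = 1 := by rw [hv₀val]; exact hpo
  have hv₀nu : ¬ IsUnit v₀ := by
    intro h
    have := (zmod_isUnit_iff v₀).mp h
    rw [Nat.coprime_iff_gcd_eq_one, hv₀val, Nat.gcd_eq_left hpn] at this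
    omega
  have hedist₀ : (ICG n {1}).edist 0 v₀ = 3 := edist_zero_odd heven hv₀odd hv₀nu
  -- diameter
  have hediam : (ICG n {1}).ediam = 3 := by
    apply le_antisymm
    · exact SimpleGraph.ediam_le_of_edist_le (edist_le_three heven)
    · rw [← hedist₀]
      exact SimpleGraph.edist_le_ediam
  have hdiam : (ICG n {1}).diam = 3 := by
    rw [SimpleGraph.diam, hediam]
    rfl
  -- dist in terms of edist
  have hdist : ∀ (v : ZMod n) (k : ℕ), k ≠ 0 →
      ((ICG n {1}).dist 0 v = k ↔ (ICG n {1}).edist 0 v = (k : ℕ∞)) := by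
    intro v k hk
    exact ENat.toNat_eq_iff hk
  -- classification
  have hclass2 : ∀ v : ZMod n, (ICG n {1}).dist 0 v = 2 ↔ (v ≠ 0 ∧ v.val % 2 = 0) := by
    intro v
    rw [hdist v 2 (by norm_num)]
    constructor
    · intro h
      rcases eq_or_ne v 0 with rfl | hv0
      · rw [SimpleGraph.edist_eq_zero_iff.mpr rfl] at h
        norm_num at h
      · refine ⟨hv0, ?_⟩
        by_contra hoddv
        have hodd1 : v.val % 2 = 1 := by omega
        by_cases hu : IsUnit v
        · rw [edist_zero_unit hu] at h
          norm_num at h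
        · rw [edist_zero_odd heven hodd1 hu] at h
          norm_num at h
    · rintro ⟨h0, he⟩
      have := edist_zero_even heven h0 he
      exact_mod_cast this
  have hclass3 : ∀ v : ZMod n, (ICG n {1}).dist 0 v = 3 ↔ (v.val % 2 = 1 ∧ ¬ IsUnit v) := by
    intro v
    rw [hdist v 3 (by norm_num)]
    constructor
    · intro h
      by_cases hodd1 : v.val % 2 = 1
      · refine ⟨hodd1, ?_⟩
        intro hu
        rw [edist_zero_unit hu] at h
        norm_num at h
      · exfalso
        rcases eq_or_ne v 0 with rfl | hv0
        · rw [SimpleGraph.edist_eq_zero_iff.mpr rfl] at h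
          norm_num at h
        · rw [edist_zero_even heven hv0 (by omega)] at h
          norm_num at h
    · rintro ⟨h1, h2⟩
      have := edist_zero_odd heven h1 h2
      exact_mod_cast this
  -- counting
  have hncard : ∀ (P : ZMod n → Prop), {v : ZMod n | P v}.ncard = (Finset.univ.filter P).card := by
    intro P
    rw [Set.ncard_eq_toFinset_card', Set.toFinset_setOf]
  refine ⟨hdiam, ?_, ?_⟩
  · rw [hncard, ← card_dist_two (n := n) heven]
    congr 1
    ext v
    simp only [Finset.mem_coe, Finset.mem_filter, Finset.mem_univ, true_and]
    exact hclass2 v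
  · rw [hncard, ← card_dist_three (n := n) heven]
    congr 1
    ext v
    simp only [Finset.mem_coe, Finset.mem_filter, Finset.mem_univ, true_and]
    exact hclass3 v

/-- for even `n` with an odd prime divisor, the unitary Cayley graph `X_n` has
diameter `3`, there are exactly `n/2 - 1` vertices at distance `2` from `0`, and exactly
`n/2 - φ(n)` vertices at distance `3` from `0`. -/
theorem unitaryCayley_even_diameter_three (n : ℕ) [NeZero n] (heven : 2 ∣ n)
    (hodd : ∃ p : ℕ, p.Prime ∧ Odd p ∧ p ∣ n) :
    (ICG n {1}).diam = 3 ∧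
    {v : ZMod n | (ICG n {1}).dist 0 v = 2}.ncard = n / 2 - 1 ∧
    {v : ZMod n | (ICG n {1}).dist 0 v = 3}.ncard = n / 2 - Nat.totient n :=
  unitaryCayley_even_diameter_three' n heven hodd
end

section
/- Let p and q be distinct odd primes and n = pq. Then the distance energy of the unitary Cayley graph X_n = ICG_n({1}) equals DE(ICG_n({1})) = 6(p − 1)(q − 1). -/
open scoped Classical

open Matrix Polynomial
open scoped Kronecker


lemma my_charpoly_conj {n' : Type} [Fintype n'] [DecidableEq n'] {R : Type} [CommRing R]
    (A B M : Matrix n' n' R) (hAB : A * B = 1) :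
    (A * M * B).charpoly = M.charpoly := by
  have hABC : A.map (C : R →+* R[X]) * B.map C = 1 := by
    rw [← Matrix.map_mul, hAB]; simp
  have hscal : A.map (C : R →+* R[X]) * (Matrix.scalar n' (X : R[X])) * B.map C
      = Matrix.scalar n' (X : R[X]) := by
    calc A.map (C : R →+* R[X]) * (Matrix.scalar n' (X : R[X])) * B.map C
        = A.map C * ((Matrix.scalar n' (X : R[X])) * B.map C) := by rw [mul_assoc]
      _ = A.map C * (B.map C * (Matrix.scalar n' (X : R[X]))) := by
          rw [(Matrix.scalar_commute (X : R[X]) (fun r' => Commute.all _ _) (B.map C)).eq]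
      _ = A.map C * B.map C * (Matrix.scalar n' (X : R[X])) := by rw [mul_assoc]
      _ = Matrix.scalar n' (X : R[X]) := by rw [hABC, one_mul]
  have hchar : charmatrix (A * M * B) = A.map C * charmatrix M * B.map C := by
    unfold charmatrix
    rw [mul_sub, sub_mul, hscal]
    congr 1
    simp [RingHom.mapMatrix_apply, Matrix.map_mul]
  have hdet : (A.map (C : R →+* R[X])).det * (B.map C).det = 1 := by
    rw [← Matrix.det_mul, hABC, Matrix.det_one]
  rw [Matrix.charpoly, hchar, Matrix.det_mul, Matrix.det_mul, Matrix.charpoly]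
  calc (A.map (C : R →+* R[X])).det * M.charmatrix.det * (B.map C).det
      = (A.map (C : R →+* R[X])).det * (B.map C).det * M.charmatrix.det := by ring
    _ = M.charmatrix.det := by rw [hdet, one_mul]

lemma my_charpoly_diagonal {n' : Type} [Fintype n'] [DecidableEq n'] {R : Type} [CommRing R]
    (d : n' → R) : (Matrix.diagonal d).charpoly = ∏ i, (X - C (d i)) := by
  have : charmatrix (Matrix.diagonal d) = Matrix.diagonal (fun i => X - C (d i)) := by
    ext i j
    by_cases h : i = j
    · subst h; simp
    · simp [h, charmatrix_apply_ne _ _ _ h, Matrix.diagonal_apply_ne _ h]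
  rw [Matrix.charpoly, this, Matrix.det_diagonal]

noncomputable def Smat (m : ℕ) : Matrix (ZMod m) (ZMod m) ℝ :=
  Matrix.of fun i k => if k = 0 then 1 else if i = k then 1 else if i = 0 then -1 else 0

noncomputable def Tmat (m : ℕ) : Matrix (ZMod m) (ZMod m) ℝ :=
  Matrix.of fun k j => (if k = j then (if j = 0 then 0 else 1) else 0)
    + (if k = 0 then 1 else -1) / m

noncomputable def Bmat (m : ℕ) : Matrix (ZMod m) (ZMod m) ℝ :=
  Matrix.of fun i j => if i = j then 2 else 1

noncomputable def dvec (m : ℕ) : ZMod m → ℝ := fun k => if k = 0 then (m : ℝ) + 1 else 1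

lemma SmatTmat (m : ℕ) [NeZero m] : Smat m * Tmat m = 1 := by
  have hm : ((m : ℝ)) ≠ 0 := Nat.cast_ne_zero.mpr (NeZero.ne m)
  have hcard : (Finset.univ : Finset (ZMod m)).card = m := by
    simpa using ZMod.card m
  ext i j
  rw [Matrix.mul_apply]
  by_cases hi : i = 0
  · subst hi
    by_cases hj : j = 0
    · subst hj
      have h1 : ∀ k : ZMod m, Smat m 0 k * Tmat m k 0 = 1 / m := by
        intro k
        by_cases hk : k = 0
        · simp [Smat, Tmat, hk]
        · simp [Smat, Tmat, hk, Ne.symm hk]; ring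
      rw [Finset.sum_congr rfl fun k _ => h1 k, Finset.sum_const, hcard]
      simp [Matrix.one_apply, hm]
    · have h1 : ∀ k : ZMod m, Smat m 0 k * Tmat m k j
          = (if k = j then (-1 : ℝ) else 0) + 1 / m := by
        intro k
        by_cases hk : k = 0
        · subst hk
          simp [Smat, Tmat, hj, Ne.symm hj]
        · by_cases hkj : k = j <;>
            simp [Smat, Tmat, hk, hkj, hj, Ne.symm hk, Ne.symm hj] <;> ring
      rw [Finset.sum_congr rfl fun k _ => h1 k, Finset.sum_add_distrib,
        Finset.sum_ite_eq' Finset.univ j (fun _ => (-1 : ℝ)), Finset.sum_const, hcard]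
      simp [Matrix.one_apply, Ne.symm hj, hm]
  · have h1 : ∀ k : ZMod m, Smat m i k * Tmat m k j
        = (if k = 0 then Tmat m 0 j else 0) + (if k = i then Tmat m i j else 0) := by
      intro k
      by_cases hk : k = 0
      · subst hk; simp [Smat, Ne.symm hi]
      · by_cases hki : k = i
        · subst hki; simp [Smat, hk]
        · simp [Smat, hk, Ne.symm hki, hki, hi]
    rw [Finset.sum_congr rfl fun k _ => h1 k, Finset.sum_add_distrib,
      Finset.sum_ite_eq' Finset.univ (0 : ZMod m) (fun _ => Tmat m 0 j),
      Finset.sum_ite_eq' Finset.univ i (fun _ => Tmat m i j)]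
    simp only [Finset.mem_univ, if_true]
    by_cases hij : i = j
    · subst hij; simp [Tmat, hi, Ne.symm hi, Matrix.one_apply]; ring
    · by_cases hj : j = 0
      · subst hj; simp [Tmat, hi, Ne.symm hi, Matrix.one_apply, hij]; ring
      · simp [Tmat, hi, Ne.symm hi, hj, Ne.symm hj, hij, Matrix.one_apply]; ring

lemma BmatSmat (m : ℕ) [NeZero m] : Bmat m * Smat m = Smat m * Matrix.diagonal (dvec m) := by
  have hcard : (Finset.univ : Finset (ZMod m)).card = m := by
    simpa using ZMod.card m
  ext i j
  rw [Matrix.mul_apply, Matrix.mul_diagonal]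
  have h1 : ∀ k : ZMod m, Bmat m i k * Smat m k j
      = Smat m k j + (if k = i then Smat m i j else 0) := by
    intro k
    by_cases hk : k = i
    · subst hk; simp [Bmat]; ring
    · simp [Bmat, Ne.symm hk, hk]
  rw [Finset.sum_congr rfl fun k _ => h1 k, Finset.sum_add_distrib,
    Finset.sum_ite_eq' Finset.univ i (fun _ => Smat m i j)]
  have hcol : ∑ k : ZMod m, Smat m k j = if j = 0 then (m : ℝ) else 0 := by
    by_cases hj : j = 0
    · subst hj
      simp [Smat, hcard]
    · have : ∀ k : ZMod m, Smat m k j = (if k = j then (1:ℝ) else 0) + (if k = 0 then (-1:ℝ) else 0) := by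
        intro k
        by_cases hk0 : k = 0
        · subst hk0; simp [Smat, Ne.symm hj, hj]
        · simp [Smat, hk0, hj]
      rw [Finset.sum_congr rfl fun k _ => this k, Finset.sum_add_distrib,
        Finset.sum_ite_eq' Finset.univ j (fun _ => (1:ℝ)),
        Finset.sum_ite_eq' Finset.univ (0 : ZMod m) (fun _ => (-1:ℝ))]
      simp [hj]
  rw [hcol]
  by_cases hj : j = 0
  · subst hj; simp [Smat, dvec]
  · simp [dvec, hj]
lemma isUnit_intCast_zmod_iff (a : ℤ) (n : ℕ) [NeZero n] :
    IsUnit ((a : ZMod n)) ↔ Int.gcd a n = 1 := by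
  have hg : Int.gcd a n = Nat.gcd a.natAbs n := by
    simp [Int.gcd]
  rw [hg]
  have hunit : IsUnit ((a : ZMod n)) ↔ IsUnit ((a.natAbs : ZMod n)) := by
    rcases Int.natAbs_eq a with h | h
    · conv_lhs => rw [h]
      rw [Int.cast_natCast]
    · conv_lhs => rw [h]
      rw [Int.cast_neg, Int.cast_natCast, IsUnit.neg_iff]
  rw [hunit]
  exact ZMod.isUnit_iff_coprime a.natAbs n

lemma prod_isUnit_iff {M N : Type*} [Monoid M] [Monoid N] {x : M × N} :
    IsUnit x ↔ IsUnit x.1 ∧ IsUnit x.2 := by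
  constructor
  · exact fun h => ⟨h.map (MonoidHom.fst M N), h.map (MonoidHom.snd M N)⟩
  · rintro ⟨⟨u, hu⟩, ⟨v, hv⟩⟩
    exact ⟨⟨(u.val, v.val), (u.inv, v.inv), by ext <;> simp, by ext <;> simp⟩,
      by simp [hu, hv]⟩

lemma ringEquiv_isUnit_iff {R S : Type*} [Ring R] [Ring S] (e : R ≃+* S) (u : R) :
    IsUnit (e u) ↔ IsUnit u := by
  constructor
  · intro h
    have := h.map e.symm.toRingHom
    simpa using this
  · exact fun h => h.map e.toRingHom

lemma exists_ne_ne {α : Type*} [Fintype α] [DecidableEq α]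
    (h : 3 ≤ Fintype.card α) (a b : α) : ∃ c, c ≠ a ∧ c ≠ b := by
  by_contra hc
  push_neg at hc
  have hsub : (Finset.univ : Finset α) ⊆ {a, b} := by
    intro x _
    rcases Classical.em (x = a) with h1 | h1
    · simp [h1]
    · simp [hc x h1]
  have := Finset.card_le_card hsub
  have h2 : ({a, b} : Finset α).card ≤ 2 :=
    (Finset.card_insert_le _ _).trans (by simp)
  rw [Finset.card_univ] at this
  omega

lemma ICG_adj_iff_s15 (n : ℕ) [NeZero n] (hn1 : 1 < n) (x y : ZMod n) :
    (ICG n {1}).Adj x y ↔ IsUnit (x - y) := by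
  haveI : Fact (1 < n) := ⟨hn1⟩
  have hcast : (((x.val : ℤ) - (y.val : ℤ) : ℤ) : ZMod n) = x - y := by
    push_cast
    simp [ZMod.natCast_val, ZMod.cast_id]
  constructor
  · rintro ⟨-, h⟩
    rw [Finset.mem_singleton] at h
    rw [← hcast]
    exact (isUnit_intCast_zmod_iff _ n).mpr h
  · intro h
    refine ⟨?_, ?_⟩
    · rintro rfl
      simp at h
    · rw [Finset.mem_singleton]
      exact (isUnit_intCast_zmod_iff _ n).mp (by rwa [hcast])

lemma ICG_dist (p q : ℕ) (hp : p.Prime) (hq : q.Prime) (hp3 : 3 ≤ p) (hq3 : 3 ≤ q)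
    (hpq : p ≠ q) (x y : ZMod (p * q)) :
    (ICG (p * q) {1}).dist x y =
      if x = y then 0 else if IsUnit (x - y) then 1 else 2 := by
  haveI : NeZero (p * q) := ⟨Nat.mul_ne_zero hp.ne_zero hq.ne_zero⟩
  haveI : Fact p.Prime := ⟨hp⟩
  haveI : Fact q.Prime := ⟨hq⟩
  have hn1 : 1 < p * q := by nlinarith
  have hco : p.Coprime q := (Nat.coprime_primes hp hq).mpr hpq
  set e := ZMod.chineseRemainder hco with he
  have hunit_iff : ∀ z : ZMod (p * q), IsUnit z ↔ (e z).1 ≠ 0 ∧ (e z).2 ≠ 0 := by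
    intro z
    rw [← ringEquiv_isUnit_iff e z, prod_isUnit_iff]
    simp [isUnit_iff_ne_zero]
  by_cases hxy : x = y
  · simp [hxy, SimpleGraph.dist_self]
  · by_cases hu : IsUnit (x - y)
    · simp only [hxy, if_false, hu, if_true]
      exact SimpleGraph.dist_eq_one_iff_adj.mpr ((ICG_adj_iff_s15 _ hn1 x y).mpr hu)
    · simp only [hxy, if_false, hu, if_false]
      -- construct a middle vertex
      obtain ⟨u, hu0, hua⟩ := exists_ne_ne
        (by rw [ZMod.card]; exact hp3) (0 : ZMod p) (e (x - y)).1
      obtain ⟨v, hv0, hvb⟩ := exists_ne_ne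
        (by rw [ZMod.card]; exact hq3) (0 : ZMod q) (e (x - y)).2
      set z := e.symm (u, v) with hz
      set c := y + z with hc
      have hez : e z = (u, v) := e.apply_symm_apply _
      have adj1 : (ICG (p * q) {1}).Adj x c := by
        rw [ICG_adj_iff_s15 _ hn1]
        rw [hunit_iff]
        have : x - c = (x - y) - z := by rw [hc]; ring
        rw [this, map_sub, hez]
        constructor
        · exact sub_ne_zero.mpr fun h => hua h.symm
        · exact sub_ne_zero.mpr fun h => hvb h.symm
      have adj2 : (ICG (p * q) {1}).Adj c y := by
        rw [ICG_adj_iff_s15 _ hn1]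
        rw [hunit_iff]
        have : c - y = z := by rw [hc]; ring
        rw [this, hez]
        exact ⟨hu0, hv0⟩
      set W : (ICG (p * q) {1}).Walk x y :=
        SimpleGraph.Walk.cons adj1 (SimpleGraph.Walk.cons adj2 SimpleGraph.Walk.nil) with hW
      have hle : (ICG (p * q) {1}).dist x y ≤ 2 := by
        have := SimpleGraph.dist_le W
        simpa [hW] using this
      have h0 : (ICG (p * q) {1}).dist x y ≠ 0 := by
        intro h
        rcases SimpleGraph.dist_eq_zero_iff_eq_or_not_reachable.mp h with h' | h'
        · exact hxy h'
        · exact h' ⟨W⟩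
      have h1 : (ICG (p * q) {1}).dist x y ≠ 1 := by
        intro h
        exact hu ((ICG_adj_iff_s15 _ hn1 x y).mp (SimpleGraph.dist_eq_one_iff_adj.mp h))
      omega


lemma distMatrix_reindex (p q : ℕ) (hp : p.Prime) (hq : q.Prime) (hp3 : 3 ≤ p) (hq3 : 3 ≤ q)
    (hpq : p ≠ q) (hco : p.Coprime q) [NeZero (p * q)] :
    Matrix.reindex (ZMod.chineseRemainder hco).toEquiv (ZMod.chineseRemainder hco).toEquiv
      (distMatrix (ICG (p * q) {1}))
    = Bmat p ⊗ₖ Bmat q - (4 : ℝ) • 1 := by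
  haveI : Fact p.Prime := ⟨hp⟩
  haveI : Fact q.Prime := ⟨hq⟩
  set e := ZMod.chineseRemainder hco with he
  have hunit_iff : ∀ z : ZMod (p * q), IsUnit z ↔ (e z).1 ≠ 0 ∧ (e z).2 ≠ 0 := by
    intro z
    rw [← ringEquiv_isUnit_iff e z, prod_isUnit_iff]
    simp [isUnit_iff_ne_zero]
  ext x y
  rw [Matrix.reindex_apply]
  set X := e.toEquiv.symm x with hX
  set Y := e.toEquiv.symm y with hY
  have heX : e X = x := e.apply_symm_apply x
  have heY : e Y = y := e.apply_symm_apply y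
  have hXY : X = Y ↔ x = y := by
    constructor
    · intro h; rw [← heX, ← heY, h]
    · intro h; rw [hX, hY, h]
  have hsub : e (X - Y) = x - y := by rw [map_sub, heX, heY]
  have hdist := ICG_dist p q hp hq hp3 hq3 hpq X Y
  show ((ICG (p * q) {1}).dist X Y : ℝ) = _
  rw [hdist]
  rw [Matrix.sub_apply, Matrix.kroneckerMap_apply, Matrix.smul_apply, Matrix.one_apply]
  by_cases h1 : x.1 = y.1 <;> by_cases h2 : x.2 = y.2
  · have hxy : x = y := Prod.ext h1 h2
    simp [hXY.mpr hxy, hxy, Bmat]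
    norm_num
  · have hxy : ¬ x = y := fun h => h2 (congrArg Prod.snd h)
    have hnu : ¬ IsUnit (X - Y) := by
      rw [hunit_iff, hsub]
      rintro ⟨hc1, -⟩
      exact hc1 (by simp [Prod.fst_sub, sub_eq_zero.mpr h1])
    simp [hXY.not.mpr hxy, hxy, hnu, Bmat, h1, h2]
  · have hxy : ¬ x = y := fun h => h1 (congrArg Prod.fst h)
    have hnu : ¬ IsUnit (X - Y) := by
      rw [hunit_iff, hsub]
      rintro ⟨-, hc2⟩
      exact hc2 (by simp [Prod.snd_sub, sub_eq_zero.mpr h2])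
    simp [hXY.not.mpr hxy, hxy, hnu, Bmat, h1, h2]
  · have hxy : ¬ x = y := fun h => h1 (congrArg Prod.fst h)
    have hu : IsUnit (X - Y) := by
      rw [hunit_iff, hsub]
      constructor
      · simp only [Prod.fst_sub]; exact sub_ne_zero.mpr h1
      · simp only [Prod.snd_sub]; exact sub_ne_zero.mpr h2
    simp [hXY.not.mpr hxy, hxy, hu, Bmat, h1, h2]

/-- for distinct odd primes `p, q` and `n = pq`, the distance energy of the
unitary Cayley graph `X_n = ICG_n({1})` equals `6(p-1)(q-1)`. -/
theorem distEnergy_ICG_pq_one (p q : ℕ) (hp : p.Prime) (hq : q.Prime) (hpodd : Odd p)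
    (hqodd : Odd q) (hpq : p ≠ q) (n : ℕ) [NeZero n] (hn : n = p * q) :
    distEnergy (ICG n {1}) = 6 * ((p : ℝ) - 1) * ((q : ℝ) - 1) := by
  subst hn
  haveI : Fact p.Prime := ⟨hp⟩
  haveI : Fact q.Prime := ⟨hq⟩
  haveI : NeZero p := ⟨hp.pos.ne'⟩
  haveI : NeZero q := ⟨hq.pos.ne'⟩
  have hp3 : 3 ≤ p := by
    have h2 : p ≠ 2 := by rintro rfl; exact (Nat.not_odd_iff_even.mpr (by norm_num)) hpodd
    have := hp.two_le; omega
  have hq3 : 3 ≤ q := by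
    have h2 : q ≠ 2 := by rintro rfl; exact (Nat.not_odd_iff_even.mpr (by norm_num)) hqodd
    have := hq.two_le; omega
  have hco : p.Coprime q := (Nat.coprime_primes hp hq).mpr hpq
  set r : ZMod p × ZMod q → ℝ := fun x => dvec p x.1 * dvec q x.2 - 4 with hr
  -- charpoly of the distance matrix equals charpoly of the diagonal matrix of `r`
  have hre := distMatrix_reindex p q hp hq hp3 hq3 hpq hco
  have hcp1 : (distMatrix (ICG (p * q) {1})).charpoly
      = (Bmat p ⊗ₖ Bmat q - (4 : ℝ) • 1).charpoly := by
    rw [← hre, Matrix.charpoly_reindex]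
  have hST : (Smat p ⊗ₖ Smat q) * (Tmat p ⊗ₖ Tmat q) = 1 := by
    rw [← Matrix.mul_kronecker_mul, SmatTmat, SmatTmat, Matrix.one_kronecker_one]
  have hdd : Matrix.diagonal r
      = Matrix.diagonal (fun x : ZMod p × ZMod q => dvec p x.1 * dvec q x.2) - (4 : ℝ) • 1 := by
    have h41 : (4 : ℝ) • (1 : Matrix (ZMod p × ZMod q) (ZMod p × ZMod q) ℝ)
        = Matrix.diagonal (fun _ => (4 : ℝ)) := by
      ext a b
      by_cases h : a = b <;> simp [Matrix.one_apply, h, Matrix.diagonal_apply]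
    rw [h41, ← Matrix.diagonal_sub]
  have hBS' : (Bmat p ⊗ₖ Bmat q - (4 : ℝ) • 1) * (Smat p ⊗ₖ Smat q)
      = (Smat p ⊗ₖ Smat q) * Matrix.diagonal r := by
    rw [sub_mul, ← Matrix.mul_kronecker_mul, BmatSmat, BmatSmat, Matrix.mul_kronecker_mul,
      Matrix.diagonal_kronecker_diagonal, hdd, mul_sub]
    congr 1
    rw [smul_mul_assoc, one_mul, mul_smul_comm, mul_one]
  have hM : Bmat p ⊗ₖ Bmat q - (4 : ℝ) • 1
      = (Smat p ⊗ₖ Smat q) * Matrix.diagonal r * (Tmat p ⊗ₖ Tmat q) := by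
    calc Bmat p ⊗ₖ Bmat q - (4 : ℝ) • 1
        = (Bmat p ⊗ₖ Bmat q - (4 : ℝ) • 1) * ((Smat p ⊗ₖ Smat q) * (Tmat p ⊗ₖ Tmat q)) := by
          rw [hST, mul_one]
      _ = ((Bmat p ⊗ₖ Bmat q - (4 : ℝ) • 1) * (Smat p ⊗ₖ Smat q)) * (Tmat p ⊗ₖ Tmat q) := by
          rw [mul_assoc]
      _ = (Smat p ⊗ₖ Smat q) * Matrix.diagonal r * (Tmat p ⊗ₖ Tmat q) := by rw [hBS']
  have hcp : (distMatrix (ICG (p * q) {1})).charpoly = ∏ x : ZMod p × ZMod q, (X - C (r x)) := by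
    rw [hcp1, hM, my_charpoly_conj _ _ _ hST, my_charpoly_diagonal]
  -- roots
  have hroots : (distMatrix (ICG (p * q) {1})).charpoly.roots = Finset.univ.val.map r := by
    rw [hcp, Finset.prod_eq_multiset_prod,
      show (Multiset.map (fun x => X - C (r x)) Finset.univ.val)
          = (Multiset.map r Finset.univ.val).map (fun a : ℝ => X - C a) from
        (Multiset.map_map (g := fun a : ℝ => X - C a) (f := r) Finset.univ.val).symm,
      Polynomial.roots_multiset_prod_X_sub_C]
  rw [distEnergy, hroots, Multiset.map_map]
  have hsum : ((Finset.univ.val.map fun x => |r x|)).sum = ∑ x : ZMod p × ZMod q, |r x| :=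
    (Finset.sum_eq_multiset_sum _ _).symm
  rw [show ((Finset.univ.val.map ((fun x => |x|) ∘ r))).sum
      = ∑ x : ZMod p × ZMod q, |r x| from (Finset.sum_eq_multiset_sum _ _).symm]
  rw [Fintype.sum_prod_type]
  -- evaluate the double sum
  have key : ∀ (mm : ℕ) [NeZero mm] (A B : ℝ),
      (∑ j : ZMod mm, if j = 0 then A else B) = A - B + mm * B := by
    intro mm _ A B
    have h1 : ∀ j : ZMod mm, (if j = 0 then A else B) = (if j = 0 then A - B else 0) + B := by
      intro j; by_cases h : j = 0 <;> simp [h]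
    rw [Finset.sum_congr rfl fun j _ => h1 j, Finset.sum_add_distrib,
      Finset.sum_ite_eq' Finset.univ (0 : ZMod mm) (fun _ => A - B), Finset.sum_const]
    have : (Finset.univ : Finset (ZMod mm)).card = mm := by simpa using ZMod.card mm
    simp [this]
  have inner : ∀ i : ZMod p, ∑ j : ZMod q, |r (i, j)|
      = |dvec p i * ((q : ℝ) + 1) - 4| - |dvec p i - 4| + q * |dvec p i - 4| := by
    intro i
    have h1 : ∀ j : ZMod q, |r (i, j)|
        = if j = 0 then |dvec p i * ((q : ℝ) + 1) - 4| else |dvec p i - 4| := by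
      intro j; by_cases h : j = 0 <;> simp [hr, dvec, h]
    rw [Finset.sum_congr rfl fun j _ => h1 j, key q]
  rw [Finset.sum_congr rfl fun i _ => inner i]
  have houter : ∀ i : ZMod p,
      (|dvec p i * ((q : ℝ) + 1) - 4| - |dvec p i - 4| + q * |dvec p i - 4|)
      = if i = 0 then |((p : ℝ) + 1) * ((q : ℝ) + 1) - 4| - |((p : ℝ) + 1) - 4|
          + q * |((p : ℝ) + 1) - 4|
        else |((q : ℝ) + 1) - 4| - |(1 : ℝ) - 4| + q * |(1 : ℝ) - 4| := by
    intro i; by_cases h : i = 0 <;> simp [dvec, h]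
  rw [Finset.sum_congr rfl fun i _ => houter i, key p]
  have hpr : (3 : ℝ) ≤ (p : ℝ) := by exact_mod_cast hp3
  have hqr : (3 : ℝ) ≤ (q : ℝ) := by exact_mod_cast hq3
  have a1 : |((p : ℝ) + 1) * ((q : ℝ) + 1) - 4| = ((p : ℝ) + 1) * ((q : ℝ) + 1) - 4 :=
    abs_of_nonneg (by nlinarith)
  have a2 : |((p : ℝ) + 1) - 4| = (p : ℝ) - 3 := by
    rw [show ((p : ℝ) + 1) - 4 = (p : ℝ) - 3 by ring]; exact abs_of_nonneg (by linarith)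
  have a3 : |((q : ℝ) + 1) - 4| = (q : ℝ) - 3 := by
    rw [show ((q : ℝ) + 1) - 4 = (q : ℝ) - 3 by ring]; exact abs_of_nonneg (by linarith)
  have a4 : |(1 : ℝ) - 4| = 3 := by norm_num
  rw [a1, a2, a3, a4]
  ring
end
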